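/- arXiv:2007.01610 — 2 statements merged into one kernel-verified Lean document; each statement's English description precedes it below -/
import Mathlib

section
/- Let (K,P,{b}) be a labeled ALCI-KB with a single negative example b and Σ = sig(K). Then the following conditions are equivalent: (1) (K,P,{b}) is non-projectively ALCI-separable; (2) there exists a forest model A of K of finite outdegree such that for all a ∈ P there is no model B of K with B,a^B ∼_{ALCI,Σ} A,b^A. -/
namespace Sep

/-! ## First-order syntax over relation symbols (arity, code) and variables ℕ.
Constants are natural numbers; formulas contain no constants. -/

inductive Fml : Type where
  | eq : ℕ → ℕ → Fml
  | rel : (k : ℕ) → ℕ → (Fin k → ℕ) → Fml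
  | neg : Fml → Fml
  | and : Fml → Fml → Fml
  | or : Fml → Fml → Fml
  | ex : ℕ → Fml → Fml
  | all : ℕ → Fml → Fml

namespace Fml

/-- Implication, as an abbreviation. -/
def imp (φ ψ : Fml) : Fml := .or (.neg φ) ψ

/-- Free variables of a formula. -/
def free : Fml → Set ℕ
  | eq x y => {x, y}
  | rel _ _ v => Set.range v
  | neg φ => φ.free
  | and φ ψ => φ.free ∪ ψ.free
  | or φ ψ => φ.free ∪ ψ.free
  | ex y φ => φ.free \ {y}
  | all y φ => φ.free \ {y}

/-- All variables (free or bound) occurring in a formula. -/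
def vars : Fml → Set ℕ
  | eq x y => {x, y}
  | rel _ _ v => Set.range v
  | neg φ => φ.vars
  | and φ ψ => φ.vars ∪ ψ.vars
  | or φ ψ => φ.vars ∪ ψ.vars
  | ex y φ => insert y φ.vars
  | all y φ => insert y φ.vars

/-- Variables occurring in equality atoms of a formula. -/
def eqVars : Fml → Set ℕ
  | eq x y => {x, y}
  | rel _ _ _ => ∅
  | neg φ => φ.eqVars
  | and φ ψ => φ.eqVars ∪ ψ.eqVars
  | or φ ψ => φ.eqVars ∪ ψ.eqVars
  | ex _ φ => φ.eqVars
  | all _ φ => φ.eqVars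

/-- The signature (set of relation symbols, as pairs (arity, code)) of a formula. -/
def sig : Fml → Set (ℕ × ℕ)
  | eq _ _ => ∅
  | rel k R _ => {(k, R)}
  | neg φ => φ.sig
  | and φ ψ => φ.sig ∪ ψ.sig
  | or φ ψ => φ.sig ∪ ψ.sig
  | ex _ φ => φ.sig
  | all _ φ => φ.sig

/-- Size of a formula (number of symbols, names counting as one symbol). -/
def size : Fml → ℕ
  | eq _ _ => 3
  | rel k _ _ => 1 + k
  | neg φ => 1 + φ.size
  | and φ ψ => 1 + φ.size + ψ.size
  | or φ ψ => 1 + φ.size + ψ.size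
  | ex _ φ => 2 + φ.size
  | all _ φ => 2 + φ.size

/-- Subformulas of a formula. -/
def subfmls : Fml → Set Fml
  | eq x y => {.eq x y}
  | rel k R v => {.rel k R v}
  | neg φ => insert (.neg φ) φ.subfmls
  | and φ ψ => insert (.and φ ψ) (φ.subfmls ∪ ψ.subfmls)
  | or φ ψ => insert (.or φ ψ) (φ.subfmls ∪ ψ.subfmls)
  | ex y φ => insert (.ex y φ) φ.subfmls
  | all y φ => insert (.all y φ) φ.subfmls

end Fml

/-- Conjunction of a list of formulas (`x₀ = x₀` as the empty conjunction). -/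
def bigAnd : List Fml → Fml
  | [] => .eq 0 0
  | [φ] => φ
  | φ :: ψ :: rest => .and φ (bigAnd (ψ :: rest))

/-- Disjunction of a list of formulas. -/
def bigOr : List Fml → Fml
  | [] => .neg (.eq 0 0)
  | [φ] => φ
  | φ :: ψ :: rest => .or φ (bigOr (ψ :: rest))

/-- Existential quantification over a list of variables. -/
def exList (ys : List ℕ) (φ : Fml) : Fml := ys.foldr Fml.ex φ

/-- Universal quantification over a list of variables. -/
def allList (ys : List ℕ) (φ : Fml) : Fml := ys.foldr Fml.all φ

/-- The atom `R(x₀,…,x_{k-1})` over the fixed tuple of distinct variables `0,…,k-1`. -/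
def baseAtom (k R : ℕ) : Fml := .rel k R fun i => (i : ℕ)

/-- The formula `∃ y⃗₁ (R(x⃗_k) ∧ ¬ x_u = x_w)` where `y⃗₁` is `x⃗_k` without `x_u`. -/
def connFml (k R u w : ℕ) : Fml :=
  exList ((List.range k).filter fun y => y != u) (.and (baseAtom k R) (.neg (.eq u w)))

/-! ## Structures and satisfaction -/

/-- A relational structure: a nonempty domain, interpretations of all relation
symbols, and interpretations of all constants (no unique name assumption). -/
structure Str : Type 1 where
  Dom : Type
  dom_nonempty : Nonempty Dom
  rel : (k : ℕ) → ℕ → (Fin k → Dom) → Prop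
  const : ℕ → Dom

namespace Fml

/-- Satisfaction of a formula in a structure under a variable assignment. -/
def Sat (A : Str) : Fml → (ℕ → A.Dom) → Prop
  | eq x y, v => v x = v y
  | rel k R args, v => A.rel k R fun i => v (args i)
  | neg φ, v => ¬ φ.Sat A v
  | and φ ψ, v => φ.Sat A v ∧ ψ.Sat A v
  | or φ ψ, v => φ.Sat A v ∨ ψ.Sat A v
  | ex y φ, v => ∃ d : A.Dom, φ.Sat A (Function.update v y d)
  | all y φ, v => ∀ d : A.Dom, φ.Sat A (Function.update v y d)

/-- Satisfaction relativized to a subset of the domain (quantifiers range over the subset). -/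
def SatIn (A : Str) (Dsub : Set A.Dom) : Fml → (ℕ → A.Dom) → Prop
  | eq x y, v => v x = v y
  | rel k R args, v => A.rel k R fun i => v (args i)
  | neg φ, v => ¬ φ.SatIn A Dsub v
  | and φ ψ, v => φ.SatIn A Dsub v ∧ ψ.SatIn A Dsub v
  | or φ ψ, v => φ.SatIn A Dsub v ∨ ψ.SatIn A Dsub v
  | ex y φ, v => ∃ d ∈ Dsub, φ.SatIn A Dsub (Function.update v y d)
  | all y φ, v => ∀ d ∈ Dsub, φ.SatIn A Dsub (Function.update v y d)

end Fml


/-! ## Databases and knowledge bases -/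

/-- A ground atom `R(a⃗)` over constants (natural numbers). -/
structure Atom : Type where
  arity : ℕ
  rel : ℕ
  args : Fin arity → ℕ

/-- Rename the constants of an atom. -/
def Atom.mapC (f : ℕ → ℕ) (a : Atom) : Atom := ⟨a.arity, a.rel, f ∘ a.args⟩

/-- An atom holds in a structure under an interpretation of the constants. -/
def Atom.Holds (a : Atom) (A : Str) (h : ℕ → A.Dom) : Prop :=
  A.rel a.arity a.rel fun i => h (a.args i)

/-- A database: a finite set of ground atoms. -/
structure Database : Type where
  atoms : Set Atom
  finite : atoms.Finite

/-- The constants occurring in a database. -/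
def Database.consts (D : Database) : Set ℕ := ⋃ a ∈ D.atoms, Set.range a.args

lemma Database.consts_finite (D : Database) : D.consts.Finite :=
  D.finite.biUnion fun _ _ => Set.finite_range _

/-- Number of constants of a database (used as its size `|D|`). -/
noncomputable def Database.csize (D : Database) : ℕ := D.consts.ncard

/-- The signature of a database. -/
def Database.sig (D : Database) : Set (ℕ × ℕ) := (fun a => (a.arity, a.rel)) '' D.atoms

/-- Two constants are adjacent in the Gaifman graph of a database. -/
def Database.adj (D : Database) (c d : ℕ) : Prop :=
  ∃ a ∈ D.atoms, c ∈ Set.range a.args ∧ d ∈ Set.range a.args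

/-- Restriction of a database to the atoms containing a constant reachable
from the set `S` in the Gaifman graph. -/
def Database.conRestrictSet (D : Database) (S : Set ℕ) : Database where
  atoms := {a | a ∈ D.atoms ∧ ∃ c ∈ S, ∃ d ∈ Set.range a.args, Relation.ReflTransGen D.adj c d}
  finite := D.finite.subset fun _ ha => ha.1

/-- `D_{con(a⃗)}`: restriction of `D` to the constants reachable from `[a⃗]`. -/
def Database.conRestrict (D : Database) {n : ℕ} (t : Fin n → ℕ) : Database :=
  D.conRestrictSet (Set.range t)

/-- A knowledge base: a finite ontology (set of formulas) and a database. -/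
structure KB : Type where
  onto : Set Fml
  onto_finite : onto.Finite
  db : Database

/-- The signature of a KB. -/
def KB.sig (K : KB) : Set (ℕ × ℕ) := (⋃ φ ∈ K.onto, φ.sig) ∪ K.db.sig

/-- Size of the ontology of a KB. -/
noncomputable def KB.ontoSize (K : KB) : ℕ := K.onto_finite.toFinset.sum Fml.size

/-- A structure is a model of a KB if it satisfies every sentence of the
ontology and every ground atom of the database. -/
def Str.IsModel (A : Str) (K : KB) : Prop :=
  (∀ φ ∈ K.onto, ∀ v : ℕ → A.Dom, φ.Sat A v) ∧ ∀ a ∈ K.db.atoms, a.Holds A A.const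

/-- Satisfiability of a KB. -/
def KB.Satisfiable (K : KB) : Prop := ∃ A : Str, A.IsModel K

/-- `K ⊨ φ(t⃗)`: every model of `K` satisfies `φ` at the tuple of constants `t⃗`. -/
def KB.entails (K : KB) {n : ℕ} (φ : Fml) (t : Fin n → ℕ) : Prop :=
  ∀ A : Str, A.IsModel K → ∀ v : ℕ → A.Dom, (∀ i : Fin n, v i.1 = A.const (t i)) → φ.Sat A v

/-! ## Separability -/

/-- `φ(x₀,…,x_{n-1})` (weakly) separates `(K, P, N)`. -/
def Separates {n : ℕ} (K : KB) (P N : Set (Fin n → ℕ)) (φ : Fml) : Prop :=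
  (∀ m ∈ φ.free, m < n) ∧ (∀ a ∈ P, K.entails φ a) ∧ ∀ b ∈ N, ¬ K.entails φ b

/-- `φ(x₀,…,x_{n-1})` strongly separates `(K, P, N)`. -/
def StronglySeparates {n : ℕ} (K : KB) (P N : Set (Fin n → ℕ)) (φ : Fml) : Prop :=
  (∀ m ∈ φ.free, m < n) ∧ (∀ a ∈ P, K.entails φ a) ∧ ∀ b ∈ N, K.entails (Fml.neg φ) b

/-- Projective separability in a language `L` (arbitrary helper symbols allowed). -/
def ProjSeparable (L : Set Fml) {n : ℕ} (K : KB) (P N : Set (Fin n → ℕ)) : Prop :=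
  ∃ φ ∈ L, Separates K P N φ

/-- Non-projective separability in a language `L` (only symbols of `sig(K)`). -/
def NonProjSeparable (L : Set Fml) {n : ℕ} (K : KB) (P N : Set (Fin n → ℕ)) : Prop :=
  ∃ φ ∈ L, φ.sig ⊆ K.sig ∧ Separates K P N φ

/-- Projective strong separability in a language `L`. -/
def ProjStronglySeparable (L : Set Fml) {n : ℕ} (K : KB) (P N : Set (Fin n → ℕ)) : Prop :=
  ∃ φ ∈ L, StronglySeparates K P N φ

/-- Non-projective strong separability in a language `L`. -/
def NonProjStronglySeparable (L : Set Fml) {n : ℕ} (K : KB) (P N : Set (Fin n → ℕ)) : Prop :=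
  ∃ φ ∈ L, φ.sig ⊆ K.sig ∧ StronglySeparates K P N φ

/-- A fragment of FO: a set of formulas closed under conjunction. -/
def IsFragment (L : Set Fml) : Prop := ∀ φ ∈ L, ∀ ψ ∈ L, Fml.and φ ψ ∈ L

/-! ## Homomorphisms from databases to structures -/

/-- `h` is a homomorphism from the database `D` into the structure `A`
(constants need not be preserved). -/
def DbHom (D : Database) (A : Str) (h : ℕ → A.Dom) : Prop :=
  ∀ a ∈ D.atoms, a.Holds A h

/-- `D,t⃗ → A,g⃗`: a homomorphism of pointed structures. -/
def PointedHom (D : Database) {n : ℕ} (t : Fin n → ℕ) (A : Str) (g : Fin n → A.Dom) : Prop :=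
  ∃ h : ℕ → A.Dom, DbHom D A h ∧ ∀ i : Fin n, h (t i) = g i

/-! ## The canonical CQ of a pointed database -/

/-- The variable associated with a constant `c` by the canonical CQ of `(D, t⃗)`:
the least answer variable `i` with `t i = c` if it exists, otherwise `n + c`. -/
noncomputable def varOf {n : ℕ} (t : Fin n → ℕ) (c : ℕ) : ℕ :=
  if ∃ i : Fin n, t i = c then sInf {m : ℕ | ∃ h : m < n, t ⟨m, h⟩ = c} else n + c

lemma Database.qvars_finite (D : Database) {n : ℕ} (t : Fin n → ℕ) :
    (D.consts \ Set.range t).Finite :=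
  D.consts_finite.subset Set.diff_subset

/-- The canonical CQ `φ_{D,t⃗}(x₀,…,x_{n-1})` of a pointed database. -/
noncomputable def canonCQ (D : Database) {n : ℕ} (t : Fin n → ℕ) : Fml :=
  exList ((D.qvars_finite t).toFinset.toList.map fun c => n + c)
    (bigAnd
      ((D.finite.toFinset.toList.map fun a =>
          Fml.rel a.arity a.rel fun i => varOf t (a.args i))
        ++
       ((List.finRange n ×ˢ List.finRange n).filterMap fun p =>
          if t p.1 = t p.2 then some (Fml.eq p.1.1 p.2.1) else none)))

/-- The canonical UCQ `⋁_{a⃗ ∈ P} φ_{D_{con(a⃗)},a⃗}`. -/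
noncomputable def canonUCQ (K : KB) {n : ℕ} (P : Set (Fin n → ℕ)) (hP : P.Finite) : Fml :=
  bigOr (hP.toFinset.toList.map fun t => canonCQ (K.db.conRestrict t) t)

/-! ## The merged database `D_{a⃗ = b⃗}` -/

/-- Equivalence identifying (the code of) `a i` with (the code of) the copy of `b i`. -/
def mergeEquiv {n : ℕ} (a b : Fin n → ℕ) : ℕ → ℕ → Prop :=
  Relation.ReflTransGen fun x y =>
    (∃ i : Fin n, x = 2 * a i ∧ y = 2 * b i + 1) ∨ ∃ i : Fin n, y = 2 * a i ∧ x = 2 * b i + 1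

/-- Canonical representative of the equivalence class. -/
noncomputable def mergeRep {n : ℕ} (a b : Fin n → ℕ) (x : ℕ) : ℕ :=
  sInf {y | mergeEquiv a b x y}

/-- `D_{a⃗ = b⃗}`: the union of `D` with a disjoint copy of itself in which
`a i` is identified with the copy of `b i`, for every `i`. -/
noncomputable def Database.merge (D : Database) {n : ℕ} (a b : Fin n → ℕ) : Database where
  atoms := (Atom.mapC (fun c => mergeRep a b (2 * c)) '' D.atoms) ∪
           (Atom.mapC (fun c => mergeRep a b (2 * c + 1)) '' D.atoms)
  finite := (D.finite.image _).union (D.finite.image _)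


/-! ## Fragments of FO -/

/-- Atomic formulas: equalities and relational atoms. -/
inductive IsAtomic : Fml → Prop
  | eq (x y : ℕ) : IsAtomic (.eq x y)
  | rel (k R : ℕ) (v : Fin k → ℕ) : IsAtomic (.rel k R v)

/-- Relational atoms. -/
inductive IsRelAtom : Fml → Prop
  | rel (k R : ℕ) (v : Fin k → ℕ) : IsRelAtom (.rel k R v)

/-- Conjunctions of atomic formulas. -/
inductive IsQFConj : Fml → Prop
  | atom {φ : Fml} : IsAtomic φ → IsQFConj φ
  | and {φ ψ : Fml} : IsQFConj φ → IsQFConj ψ → IsQFConj (.and φ ψ)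

/-- Conjunctive queries: existentially quantified conjunctions of relational
atoms and equalities between free variables. -/
inductive IsCQ : Fml → Prop
  | base {φ : Fml} : IsQFConj φ → IsCQ φ
  | ex {φ : Fml} (y : ℕ) : IsCQ φ → y ∉ φ.eqVars → IsCQ (.ex y φ)

/-- Unions of conjunctive queries: disjunctions of CQs with the same free variables. -/
inductive IsUCQ : Fml → Prop
  | cq {φ : Fml} : IsCQ φ → IsUCQ φ
  | or {φ ψ : Fml} : IsUCQ φ → IsUCQ ψ → φ.free = ψ.free → IsUCQ (.or φ ψ)

def UCQs : Set Fml := {φ | IsUCQ φ}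

/-- The guarded fragment GF. -/
inductive IsGF : Fml → Prop
  | eq (x y : ℕ) : IsGF (.eq x y)
  | rel (k R : ℕ) (v : Fin k → ℕ) : IsGF (.rel k R v)
  | neg {φ : Fml} : IsGF φ → IsGF (.neg φ)
  | and {φ ψ : Fml} : IsGF φ → IsGF ψ → IsGF (.and φ ψ)
  | or {φ ψ : Fml} : IsGF φ → IsGF ψ → IsGF (.or φ ψ)
  | exg (ys : List ℕ) {α φ : Fml} : IsAtomic α → IsGF φ → φ.free ⊆ α.free →
      (∀ y ∈ ys, y ∈ α.free) → IsGF (exList ys (.and α φ))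
  | allg (ys : List ℕ) {α φ : Fml} : IsAtomic α → IsGF φ → φ.free ⊆ α.free →
      (∀ y ∈ ys, y ∈ α.free) → IsGF (allList ys (α.imp φ))

def GFs : Set Fml := {φ | IsGF φ}

/-- The open guarded fragment openGF: all subformulas are open and equality is
never used as a guard. -/
inductive IsOpenGF : Fml → Prop
  | eq (x y : ℕ) : IsOpenGF (.eq x y)
  | rel (k R : ℕ) (v : Fin k → ℕ) : 0 < k → IsOpenGF (.rel k R v)
  | neg {φ : Fml} : IsOpenGF φ → IsOpenGF (.neg φ)
  | and {φ ψ : Fml} : IsOpenGF φ → IsOpenGF ψ → IsOpenGF (.and φ ψ)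
  | or {φ ψ : Fml} : IsOpenGF φ → IsOpenGF ψ → IsOpenGF (.or φ ψ)
  | exg (ys : List ℕ) {α φ : Fml} : IsRelAtom α → IsOpenGF φ → φ.free ⊆ α.free →
      (∀ y ∈ ys, y ∈ α.free) → ((Fml.and α φ).free \ {y | y ∈ ys}).Nonempty →
      IsOpenGF (exList ys (.and α φ))
  | allg (ys : List ℕ) {α φ : Fml} : IsRelAtom α → IsOpenGF φ → φ.free ⊆ α.free →
      (∀ y ∈ ys, y ∈ α.free) → ((α.imp φ).free \ {y | y ∈ ys}).Nonempty →
      IsOpenGF (allList ys (α.imp φ))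

def OpenGFs : Set Fml := {φ | IsOpenGF φ}

/-- The guarded negation fragment GNFO. -/
inductive IsGNFO : Fml → Prop
  | eq (x y : ℕ) : IsGNFO (.eq x y)
  | rel (k R : ℕ) (v : Fin k → ℕ) : IsGNFO (.rel k R v)
  | and {φ ψ : Fml} : IsGNFO φ → IsGNFO ψ → IsGNFO (.and φ ψ)
  | or {φ ψ : Fml} : IsGNFO φ → IsGNFO ψ → IsGNFO (.or φ ψ)
  | ex (y : ℕ) {φ : Fml} : IsGNFO φ → IsGNFO (.ex y φ)
  | gneg {α φ : Fml} : IsAtomic α → IsGNFO φ → φ.free ⊆ α.free → IsGNFO (.and α (.neg φ))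

def GNFOs : Set Fml := {φ | IsGNFO φ}

/-- The two-variable fragment FO²: only the two fixed variables `0` and `1` are used. -/
def FO2s : Set Fml := {φ : Fml | φ.vars ⊆ {0, 1}}

/-- Two variables are adjacent in the Gaifman graph of a formula (they co-occur
in an atom of the formula). -/
def Fml.varAdj (φ : Fml) (x y : ℕ) : Prop :=
  ∃ ψ ∈ φ.subfmls, IsAtomic ψ ∧ x ∈ ψ.free ∧ y ∈ ψ.free

/-- A rooted CQ: every variable is reachable from an answer (free) variable in
the Gaifman graph of the CQ. -/
def IsRootedCQ (φ : Fml) : Prop :=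
  IsCQ φ ∧ ∀ x ∈ φ.vars, ∃ u ∈ φ.free, Relation.ReflTransGen φ.varAdj u x

/-- Rooted UCQs. -/
inductive IsRootedUCQ : Fml → Prop
  | cq {φ : Fml} : IsRootedCQ φ → IsRootedUCQ φ
  | or {φ ψ : Fml} : IsRootedUCQ φ → IsRootedUCQ ψ → φ.free = ψ.free → IsRootedUCQ (.or φ ψ)

/-! ## ALCI concepts -/

/-- ALCI concepts: `⊤`, concept names, `¬`, `⊓`, and `∃R.C`/`∃R⁻.C`
(the Boolean indicates an inverse role). -/
inductive Concept : Type where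
  | top : Concept
  | atom : ℕ → Concept
  | neg : Concept → Concept
  | inter : Concept → Concept → Concept
  | exRole : Bool → ℕ → Concept → Concept

namespace Concept

/-- Extension of a concept in a structure. -/
def interp (A : Str) : Concept → Set A.Dom
  | top => Set.univ
  | atom c => {d | A.rel 1 c ![d]}
  | neg C => (C.interp A)ᶜ
  | inter C D => C.interp A ∩ D.interp A
  | exRole inv R C => {d | ∃ e ∈ C.interp A, if inv then A.rel 2 R ![e, d] else A.rel 2 R ![d, e]}

/-- Signature of a concept. -/
def csig : Concept → Set (ℕ × ℕ)
  | top => ∅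
  | atom c => {(1, c)}
  | neg C => C.csig
  | inter C D => C.csig ∪ D.csig
  | exRole _ R C => insert (2, R) C.csig

/-- Size of a concept. -/
def size : Concept → ℕ
  | top => 1
  | atom _ => 1
  | neg C => 1 + C.size
  | inter C D => 1 + C.size + D.size
  | exRole _ _ C => 2 + C.size

/-- Subconcepts of a concept. -/
def subconcepts : Concept → Set Concept
  | top => {top}
  | atom c => {atom c}
  | neg C => insert (neg C) C.subconcepts
  | inter C D => insert (inter C D) (C.subconcepts ∪ D.subconcepts)
  | exRole i R C => insert (exRole i R C) C.subconcepts

/-- The standard translation of a concept into an FO formula with free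
variable `x ∈ {0,1}` (the other of the two variables is `1 - x`). -/
def toFml : Concept → ℕ → Fml
  | top, x => .eq x x
  | atom c, x => .rel 1 c ![x]
  | neg C, x => .neg (C.toFml x)
  | inter C D, x => .and (C.toFml x) (D.toFml x)
  | exRole inv R C, x =>
      .ex (1 - x) (.and (if inv then Fml.rel 2 R ![1 - x, x] else Fml.rel 2 R ![x, 1 - x])
        (C.toFml (1 - x)))

end Concept

/-- ALCI concepts, viewed as FO formulas in the free variable `x₀`. -/
def ALCIs : Set Fml := {φ | ∃ C : Concept, φ = C.toFml 0}


/-! ## ALCI knowledge bases, types, bisimulations -/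

/-- The FO translation `∀x₀∀x₁ (C(x₀) → D(x₀))` of a concept inclusion. -/
def CIfml (p : Concept × Concept) : Fml :=
  .all 1 (.all 0 ((p.1.toFml 0).imp (p.2.toFml 0)))

/-- An ALCI knowledge base: a finite set of concept inclusions together with a
database containing only unary and binary atoms. -/
structure ALCIKB : Type where
  onto : Set (Concept × Concept)
  onto_finite : onto.Finite
  db : Database
  db_arity : ∀ a ∈ db.atoms, a.arity = 1 ∨ a.arity = 2

/-- The underlying FO knowledge base of an ALCI KB. -/
def ALCIKB.toKB (K : ALCIKB) : KB where
  onto := CIfml '' K.onto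
  onto_finite := K.onto_finite.image _
  db := K.db

/-- Signature of an ALCI KB. -/
def ALCIKB.sigK (K : ALCIKB) : Set (ℕ × ℕ) := K.toKB.sig

/-- Size of the ontology of an ALCI KB. -/
noncomputable def ALCIKB.ontoSize (K : ALCIKB) : ℕ :=
  K.onto_finite.toFinset.sum fun p => p.1.size + p.2.size + 1

/-- `cl(K)`: the concepts occurring in `K` together with `∃R.⊤`, `∃R⁻.⊤` for all
role names of `sig(K)`, closed under subconcepts and single negation. -/
def ALCIKB.cl (K : ALCIKB) : Set Concept :=
  ((⋃ p ∈ K.onto, p.1.subconcepts ∪ p.2.subconcepts) ∪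
     (⋃ C ∈ {C : Concept | ∃ a ∈ K.db.atoms, a.arity = 1 ∧ C = Concept.atom a.rel}, C.subconcepts) ∪
     (⋃ C ∈ {C : Concept | ∃ R i, ((2 : ℕ), R) ∈ K.sigK ∧ C = Concept.exRole i R Concept.top},
        C.subconcepts)) ∪
  Concept.neg ''
    ((⋃ p ∈ K.onto, p.1.subconcepts ∪ p.2.subconcepts) ∪
     (⋃ C ∈ {C : Concept | ∃ a ∈ K.db.atoms, a.arity = 1 ∧ C = Concept.atom a.rel}, C.subconcepts) ∪
     (⋃ C ∈ {C : Concept | ∃ R i, ((2 : ℕ), R) ∈ K.sigK ∧ C = Concept.exRole i R Concept.top},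
        C.subconcepts))

/-- `tp_K(A, d)`: the `K`-type of `d` in `A`. -/
def ALCIKB.tp (K : ALCIKB) (A : Str) (d : A.Dom) : Set Concept :=
  {C | C ∈ K.cl ∧ d ∈ C.interp A}

/-- `t` is a `K`-type: it is realized in some model of `K`. -/
def ALCIKB.IsType (K : ALCIKB) (t : Set Concept) : Prop :=
  ∃ A : Str, A.IsModel K.toKB ∧ ∃ d : A.Dom, K.tp A d = t

/-- `t` is realizable in `K, b`. -/
def ALCIKB.RealizableAt (K : ALCIKB) (b : ℕ) (t : Set Concept) : Prop :=
  ∃ A : Str, A.IsModel K.toKB ∧ K.tp A (A.const b) = t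

/-- A type is connected if it contains `∃R.⊤` for some role `R`. -/
def TypeConnected (t : Set Concept) : Prop :=
  ∃ i R, Concept.exRole i R Concept.top ∈ t

/-- `ρ = (inv, R)` is a role (a role name or its inverse); `roleHolds A ρ d e`
says that `(d, e)` is in the extension of the role. -/
def roleHolds (A : Str) (ρ : Bool × ℕ) (d e : A.Dom) : Prop :=
  if ρ.1 then A.rel 2 ρ.2 ![e, d] else A.rel 2 ρ.2 ![d, e]

/-- `S` is a Σ-bisimulation (for ALCI) between `A` and `B`. -/
structure IsALCIBisim (sg : Set (ℕ × ℕ)) (A B : Str) (S : Set (A.Dom × B.Dom)) : Prop where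
  atom : ∀ p ∈ S, ∀ c : ℕ, (1, c) ∈ sg → (A.rel 1 c ![p.1] ↔ B.rel 1 c ![p.2])
  forth : ∀ p ∈ S, ∀ ρ : Bool × ℕ, (2, ρ.2) ∈ sg →
    ∀ d' : A.Dom, roleHolds A ρ p.1 d' → ∃ e' : B.Dom, roleHolds B ρ p.2 e' ∧ (d', e') ∈ S
  back : ∀ p ∈ S, ∀ ρ : Bool × ℕ, (2, ρ.2) ∈ sg →
    ∀ e' : B.Dom, roleHolds B ρ p.2 e' → ∃ d' : A.Dom, roleHolds A ρ p.1 d' ∧ (d', e') ∈ S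

/-- `A,d ∼_{ALCI,Σ} B,e`. -/
def ALCIBisimilar (sg : Set (ℕ × ℕ)) (A : Str) (d : A.Dom) (B : Str) (e : B.Dom) : Prop :=
  ∃ S : Set (A.Dom × B.Dom), IsALCIBisim sg A B S ∧ (d, e) ∈ S

/-- A `K`-type `t` is ALCI-complete. -/
def ALCIKB.TypeComplete (K : ALCIKB) (t : Set Concept) : Prop :=
  ∀ A B : Str, A.IsModel K.toKB → B.IsModel K.toKB → ∀ (d : A.Dom) (e : B.Dom),
    K.tp A d = t → K.tp B e = t → ALCIBisimilar K.sigK A d B e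

/-- `(K,P,N)` is strongly incomplete: no connected `K`-type realizable at some
negative example is ALCI-complete. -/
def ALCIKB.StronglyIncomplete (K : ALCIKB) (N : Set ℕ) : Prop :=
  ∀ t : Set Concept, TypeConnected t → (∃ b ∈ N, K.RealizableAt b t) → ¬ K.TypeComplete t

/-- `t₁ ⇝_ρ t₂`: the types are `ρ`-coherent. -/
def ALCIKB.Coherent (K : ALCIKB) (t₁ t₂ : Set Concept) (ρ : Bool × ℕ) : Prop :=
  ∃ A : Str, A.IsModel K.toKB ∧ ∃ d e : A.Dom, K.tp A d = t₁ ∧ K.tp A e = t₂ ∧ roleHolds A ρ d e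

/-- The sequence `t₀ ρ₀ … ρ_n t_{n+1}` witnesses ALCI-incompleteness of the type `t`. -/
def ALCIKB.WitSeq (K : ALCIKB) (t : Set Concept) (n : ℕ)
    (ts : Fin (n + 2) → Set Concept) (ρs : Fin (n + 1) → Bool × ℕ) : Prop :=
  1 ≤ n ∧
  ts 0 = t ∧
  (∀ i : Fin (n + 2), K.IsType (ts i)) ∧
  (∀ i : Fin (n + 1), ((2 : ℕ), (ρs i).2) ∈ K.sigK) ∧
  (∀ i : Fin (n + 1), K.Coherent (ts i.castSucc) (ts i.succ) (ρs i)) ∧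
  ∃ A : Str, A.IsModel K.toKB ∧ ∃ d e : A.Dom,
    roleHolds A (ρs ⟨n - 1, by omega⟩) d e ∧
    K.tp A d = ts ⟨n - 1, by omega⟩ ∧ K.tp A e = ts ⟨n, by omega⟩ ∧
    ¬ ∃ f : A.Dom, K.tp A f = ts ⟨n + 1, by omega⟩ ∧ roleHolds A (ρs ⟨n, by omega⟩) e f

/-! ### Weak and strong separability by ALCI concepts -/

/-- A concept `C` (weakly) separates `(K, P, N)`. -/
def ALCIKB.SeparatesC (K : ALCIKB) (P N : Set ℕ) (C : Concept) : Prop :=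
  (∀ a ∈ P, ∀ A : Str, A.IsModel K.toKB → A.const a ∈ C.interp A) ∧
  ∀ b ∈ N, ¬ ∀ A : Str, A.IsModel K.toKB → A.const b ∈ C.interp A

/-- A concept `C` strongly separates `(K, P, N)`. -/
def ALCIKB.StronglySeparatesC (K : ALCIKB) (P N : Set ℕ) (C : Concept) : Prop :=
  (∀ a ∈ P, ∀ A : Str, A.IsModel K.toKB → A.const a ∈ C.interp A) ∧
  ∀ b ∈ N, ∀ A : Str, A.IsModel K.toKB → A.const b ∉ C.interp A

/-- Non-projective ALCI-separability of a labeled ALCI KB. -/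
def ALCIKB.CSeparable (K : ALCIKB) (P N : Set ℕ) : Prop :=
  ∃ C : Concept, C.csig ⊆ K.sigK ∧ K.SeparatesC P N C

/-- Projective ALCI-separability of a labeled ALCI KB. -/
def ALCIKB.CProjSeparable (K : ALCIKB) (P N : Set ℕ) : Prop :=
  ∃ C : Concept, K.SeparatesC P N C

/-- Non-projective strong ALCI-separability of a labeled ALCI KB. -/
def ALCIKB.CStronglySeparable (K : ALCIKB) (P N : Set ℕ) : Prop :=
  ∃ C : Concept, C.csig ⊆ K.sigK ∧ K.StronglySeparatesC P N C

/-! ### ALCI(Σ)-embeddings -/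

/-- An ALCI(Σ)-embedding of a (unary/binary) database into a structure. -/
def ALCIEmbed (sg : Set (ℕ × ℕ)) (D : Database) (A : Str) (S : Set (ℕ × A.Dom)) : Prop :=
  (∀ p ∈ S, ∀ c : ℕ, (⟨1, c, ![p.1]⟩ : Atom) ∈ D.atoms → A.rel 1 c ![p.2]) ∧
  (∀ p ∈ S, ∀ q ∈ S, p.1 = q.1 → ALCIBisimilar sg A p.2 A q.2) ∧
  (∀ p ∈ S, ∀ R a', (⟨2, R, ![p.1, a']⟩ : Atom) ∈ D.atoms →
      ∃ b' : A.Dom, A.rel 2 R ![p.2, b'] ∧ (a', b') ∈ S) ∧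
  (∀ p ∈ S, ∀ R a', (⟨2, R, ![a', p.1]⟩ : Atom) ∈ D.atoms →
      ∃ b' : A.Dom, A.rel 2 R ![b', p.2] ∧ (a', b') ∈ S)

/-- `D,a ≼_Σ A,d`: some ALCI(Σ)-embedding contains `(a, d)`. -/
def ALCIEmbeddable (sg : Set (ℕ × ℕ)) (D : Database) (a : ℕ) (A : Str) (d : A.Dom) : Prop :=
  ∃ S : Set (ℕ × A.Dom), ALCIEmbed sg D A S ∧ (a, d) ∈ S

/-! ### Forest models -/

/-- There is a role edge from `d` to `e` (in either direction). -/
def Str.RoleEdge (A : Str) (d e : A.Dom) : Prop :=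
  ∃ R, A.rel 2 R ![d, e] ∨ A.rel 2 R ![e, d]

/-- `(d, e)` is an edge induced by a binary database atom. -/
def Str.DbEdge (A : Str) (K : ALCIKB) (d e : A.Dom) : Prop :=
  ∃ R x y, (⟨2, R, ![x, y]⟩ : Atom) ∈ K.db.atoms ∧ d = A.const x ∧ e = A.const y

/-- A role edge that is not induced by the database. -/
def Str.TreeEdge (A : Str) (K : ALCIKB) (d e : A.Dom) : Prop :=
  A.RoleEdge d e ∧ ¬ A.DbEdge K d e ∧ ¬ A.DbEdge K e d

/-- The graph of tree edges. -/
def Str.forestGraph (A : Str) (K : ALCIKB) : SimpleGraph A.Dom where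
  Adj d e := d ≠ e ∧ A.TreeEdge K d e
  symm := ⟨by
    rintro d e ⟨hne, ⟨R, hR⟩, h1, h2⟩
    exact ⟨hne.symm, ⟨R, hR.symm⟩, h2, h1⟩⟩
  loopless := ⟨fun d h => h.1 rfl⟩

/-- `A` is a forest model of the ALCI KB `K`: a model that is the disjoint union
of tree-shaped structures, one rooted at each `c^A` for `c ∈ cons(D)`, extended
with the edges induced by the binary database atoms. -/
def Str.IsForestModel (A : Str) (K : ALCIKB) : Prop :=
  A.IsModel K.toKB ∧
  (∀ k R t, A.rel k R t → k = 1 ∨ k = 2) ∧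
  (∀ d : A.Dom, A.RoleEdge d d → A.DbEdge K d d) ∧
  (A.forestGraph K).IsAcyclic ∧
  (∀ d : A.Dom, ∃ c ∈ K.db.consts, (A.forestGraph K).Reachable (A.const c) d) ∧
  (∀ c ∈ K.db.consts, ∀ c' ∈ K.db.consts, A.const c ≠ A.const c' →
      ¬ (A.forestGraph K).Reachable (A.const c) (A.const c'))

/-- `A` has finite outdegree. -/
def Str.FiniteOutdegree (A : Str) : Prop :=
  ∀ d : A.Dom, {e : A.Dom | A.RoleEdge d e}.Finite

/-! ## Guarded bisimulations -/

/-- A set of domain elements is guarded in a structure. -/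
def Str.GuardedSet (A : Str) (G : Set A.Dom) : Prop :=
  (∃ d, G = {d}) ∨ ∃ k R, ∃ t : Fin k → A.Dom, A.rel k R t ∧ G = Set.range t

/-- A tuple is guarded in a structure. -/
def Str.GuardedTuple (A : Str) {k : ℕ} (t : Fin k → A.Dom) : Prop :=
  ∃ G, A.GuardedSet G ∧ Set.range t ⊆ G

/-- `a⃗ ↦ b⃗` is a partial Σ-isomorphism. -/
def PartialIso (sg : Set (ℕ × ℕ)) (A B : Str) {k : ℕ}
    (a : Fin k → A.Dom) (b : Fin k → B.Dom) : Prop :=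
  (∀ i j, a i = a j ↔ b i = b j) ∧
  ∀ m R, (m, R) ∈ sg → ∀ f : Fin m → Fin k, (A.rel m R (a ∘ f) ↔ B.rel m R (b ∘ f))

/-- A pair of equally long tuples in two structures. -/
structure GPair (A B : Str) : Type where
  k : ℕ
  a : Fin k → A.Dom
  b : Fin k → B.Dom

/-- Forth condition; if `conn = true` it is only required for guarded tuples
overlapping the current one (connected guarded bisimulations). -/
def StepForth (conn : Bool) (A B : Str) (I : Set (GPair A B)) (p : GPair A B) : Prop :=
  ∀ (k' : ℕ) (a' : Fin k' → A.Dom), A.GuardedTuple a' →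
    (conn → (Set.range a' ∩ Set.range p.a).Nonempty) →
    ∃ b' : Fin k' → B.Dom, GPair.mk k' a' b' ∈ I ∧ ∀ i j, p.a i = a' j → p.b i = b' j

/-- Back condition. -/
def StepBack (conn : Bool) (A B : Str) (I : Set (GPair A B)) (p : GPair A B) : Prop :=
  ∀ (k' : ℕ) (b' : Fin k' → B.Dom), B.GuardedTuple b' →
    (conn → (Set.range b' ∩ Set.range p.b).Nonempty) →
    ∃ a' : Fin k' → A.Dom, GPair.mk k' a' b' ∈ I ∧ ∀ i j, p.b i = b' j → p.a i = a' j

/-- `I` is a (connected, if `conn`) guarded Σ-bisimulation between `A` and `B`. -/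
def IsGBisim (conn : Bool) (sg : Set (ℕ × ℕ)) (A B : Str) (I : Set (GPair A B)) : Prop :=
  ∀ p ∈ I, A.GuardedTuple p.a ∧ B.GuardedTuple p.b ∧ PartialIso sg A B p.a p.b ∧
    StepForth conn A B I p ∧ StepBack conn A B I p

/-- `A,a⃗ ∼_{GF,Σ} B,b⃗` (`conn = false`) resp. `A,a⃗ ∼_{openGF,Σ} B,b⃗` (`conn = true`). -/
def GBisimilar (conn : Bool) (sg : Set (ℕ × ℕ)) (A : Str) {n : ℕ} (a : Fin n → A.Dom)
    (B : Str) (b : Fin n → B.Dom) : Prop :=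
  ∃ I : Set (GPair A B), IsGBisim conn sg A B I ∧ PartialIso sg A B a b ∧
    StepForth conn A B I ⟨n, a, b⟩ ∧ StepBack conn A B I ⟨n, a, b⟩

/-- A sequence `I_ℓ, …, I₀` witnessing (connected) guarded Σ `ℓ`-bisimilarity. -/
def IsGBisimSeq (conn : Bool) (sg : Set (ℕ × ℕ)) (A B : Str)
    (Is : ℕ → Set (GPair A B)) (ℓ : ℕ) : Prop :=
  (∀ i, i < ℓ → ∀ p ∈ Is i, A.GuardedTuple p.a ∧ B.GuardedTuple p.b) ∧
  (∀ i, i ≤ ℓ → ∀ p ∈ Is i, PartialIso sg A B p.a p.b) ∧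
  ∀ i, i < ℓ → ∀ p ∈ Is (i + 1), StepForth conn A B (Is i) p ∧ StepBack conn A B (Is i) p

/-- `A,a⃗ ∼^ℓ_{GF,Σ} B,b⃗` (`conn = false`) resp. `A,a⃗ ∼^ℓ_{openGF,Σ} B,b⃗` (`conn = true`). -/
def GLBisimilar (conn : Bool) (sg : Set (ℕ × ℕ)) (A : Str) {n : ℕ} (a : Fin n → A.Dom)
    (B : Str) (b : Fin n → B.Dom) (ℓ : ℕ) : Prop :=
  ∃ Is : ℕ → Set (GPair A B), IsGBisimSeq conn sg A B Is ℓ ∧ GPair.mk n a b ∈ Is ℓ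

/-! ## Guarded Σ ℓ-embeddings -/

/-- A pair of tuples: constants of a database and elements of a structure. -/
structure EPair (A : Str) : Type where
  k : ℕ
  c : Fin k → ℕ
  f : Fin k → A.Dom

/-- `p` is a partial embedding (injective partial homomorphism) from `D` into `A`. -/
def IsPartialEmbed (D : Database) (A : Str) (p : EPair A) : Prop :=
  (∀ i j, p.c i = p.c j ↔ p.f i = p.f j) ∧
  (∀ i, p.c i ∈ D.consts) ∧
  ∀ a ∈ D.atoms, ∀ g : Fin a.arity → Fin p.k, a.args = p.c ∘ g →
    A.rel a.arity a.rel (p.f ∘ g)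

/-- Guarded sets of a database. -/
def Database.GuardedSet (D : Database) (G : Set ℕ) : Prop :=
  (∃ c ∈ D.consts, G = {c}) ∨ ∃ a ∈ D.atoms, G = Set.range a.args

/-- `e` is a homomorphism from `D` onto `D'`. -/
def DbHomOnto (e : ℕ → ℕ) (D D' : Database) : Prop :=
  (∀ a ∈ D.atoms, a.mapC e ∈ D'.atoms) ∧ ∀ a' ∈ D'.atoms, ∃ a ∈ D.atoms, a.mapC e = a'

/-- `D,t⃗ ≼^ℓ_{openGF,Σ} A,b⃗`: there is a guarded Σ `ℓ`-embedding `(e, H)`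
between the pointed database `(D, t⃗)` and the pointed structure `(A, b⃗)`. -/
def GLEmbed (sg : Set (ℕ × ℕ)) (D : Database) {n : ℕ} (t : Fin n → ℕ)
    (A : Str) (b : Fin n → A.Dom) (ℓ : ℕ) : Prop :=
  ∃ (D' : Database) (e : ℕ → ℕ) (H : Set (EPair A)),
    DbHomOnto e D D' ∧
    (∀ p ∈ H, IsPartialEmbed D' A p) ∧
    EPair.mk n (e ∘ t) b ∈ H ∧
    (∀ G : Set ℕ, D'.GuardedSet G → ∃ p ∈ H, Set.range p.c = G) ∧
    ∀ p₁ ∈ H, ∀ p₂ ∈ H,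
      ∃ (m : ℕ) (j₁ : Fin m → Fin p₁.k) (j₂ : Fin m → Fin p₂.k),
        p₁.c ∘ j₁ = p₂.c ∘ j₂ ∧
        Set.range (p₁.c ∘ j₁) = Set.range p₁.c ∩ Set.range p₂.c ∧
        PartialIso sg A A (p₁.f ∘ j₁) (p₂.f ∘ j₂) ∧
        ∀ (k' : ℕ) (g : Fin k' → Fin m),
          Set.range (p₁.f ∘ j₁ ∘ g) = Set.range (p₁.f ∘ j₁) →
          GLBisimilar true sg A (p₁.f ∘ j₁ ∘ g) A (p₂.f ∘ j₂ ∘ g) ℓ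

/-! ## Gaifman graph of a structure -/

/-- Adjacency in the Gaifman graph of a structure. -/
def Str.Adj (A : Str) (d e : A.Dom) : Prop :=
  ∃ k R, ∃ t : Fin k → A.Dom, A.rel k R t ∧ d ∈ Set.range t ∧ e ∈ Set.range t

/-- `WithinDist A m d e`: `e` is at distance at most `m` from `d` in the
Gaifman graph of `A`. -/
def WithinDist (A : Str) : ℕ → A.Dom → A.Dom → Prop
  | 0, d, e => d = e
  | m + 1, d, e => d = e ∨ ∃ c, A.Adj d c ∧ WithinDist A m c e

/-! ## K-types for GF-KBs -/

/-- `cl(K)` for a GF-KB: the formulas of the ontology, equalities between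
distinct variables, and for every `R ∈ sig(K)` of arity `k` the formulas
`R(x⃗_k)`, `∃y⃗₁(R(x⃗_k) ∧ ¬ x_u = x_w)` and `∃y⃗₂ R(x⃗_k)` (`[y⃗₂] ⊆ [x⃗_k]∖{x_u,x_w}`),
closed under subformulas and single negation. -/
def KB.clGFbase (K : KB) : Set Fml :=
  K.onto ∪
  {φ | ∃ x y : ℕ, x ≠ y ∧ φ = Fml.eq x y} ∪
  {φ | ∃ k R, (k, R) ∈ K.sig ∧
    (φ = baseAtom k R ∨
     (∃ u w : ℕ, u < k ∧ w < k ∧ u ≠ w ∧ φ = connFml k R u w) ∨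
     ∃ u w : ℕ, u < k ∧ w < k ∧ u ≠ w ∧
       ∃ ys : List ℕ, (∀ z ∈ ys, z < k ∧ z ≠ u ∧ z ≠ w) ∧ φ = exList ys (baseAtom k R))}

def KB.clGF (K : KB) : Set Fml :=
  (⋃ φ ∈ K.clGFbase, φ.subfmls) ∪ Fml.neg '' (⋃ φ ∈ K.clGFbase, φ.subfmls)

/-- `tp_K(A, b⃗)`: the `K`-type of the tuple `b⃗` in `A`, represented as the set
of pairs `(φ, σ)` with `φ ∈ cl(K)` and `σ` a substitution of the variables of
`φ` by positions of `b⃗` making `φ` true at `b⃗`. -/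
def KB.tpGF (K : KB) (A : Str) {m : ℕ} (b : Fin m → A.Dom) : Set (Fml × (ℕ → Fin m)) :=
  {p | p.1 ∈ K.clGF ∧ p.1.Sat A fun x => b (p.2 x)}

/-- `Φ` is a `K`-type (of tuples of length `m`). -/
def KB.IsGFTypeAt (K : KB) {m : ℕ} (Φ : Set (Fml × (ℕ → Fin m))) : Prop :=
  ∃ A : Str, A.IsModel K ∧ ∃ b : Fin m → A.Dom, K.tpGF A b = Φ

/-- `Φ` is realizable in `K, t⃗`. -/
def KB.GFRealizableAt (K : KB) {m : ℕ} (t : Fin m → ℕ) (Φ : Set (Fml × (ℕ → Fin m))) : Prop :=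
  ∃ A : Str, A.IsModel K ∧ K.tpGF A (fun i => A.const (t i)) = Φ

/-- The tuple `w⃗` satisfies all (substituted) formulas of `Φ` in `A`. -/
def TypeSat (A : Str) {m : ℕ} (w : Fin m → A.Dom) (Φ : Set (Fml × (ℕ → Fin m))) : Prop :=
  ∀ p ∈ Φ, p.1.Sat A fun x => w (p.2 x)

/-- A `K`-type `Φ(x⃗)` is connected: it contains a formula `∃y⃗₁(R(x⃗) ∧ x_u ≠ x_w)`. -/
def GFTypeConnected {m : ℕ} (Φ : Set (Fml × (ℕ → Fin m))) : Prop :=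
  ∃ k R u w, ∃ σ : ℕ → Fin m, u < k ∧ w < k ∧ u ≠ w ∧ (connFml k R u w, σ) ∈ Φ

/-- A `K`-type `Φ(x⃗)` is guarded: it contains the atom `R(x⃗)` (on the full tuple). -/
def GFTypeGuarded {m : ℕ} (Φ : Set (Fml × (ℕ → Fin m))) : Prop :=
  ∃ R, ∃ σ : ℕ → Fin m, (∀ i : Fin m, σ i.1 = i) ∧ (baseAtom m R, σ) ∈ Φ

/-- A `K`-type is non-unary: it contains `¬ (x = y)` for (substituted-)distinct variables. -/
def GFTypeNonUnary {m : ℕ} (Φ : Set (Fml × (ℕ → Fin m))) : Prop :=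
  ∃ x y, ∃ σ : ℕ → Fin m, σ x ≠ σ y ∧ (Fml.neg (.eq x y), σ) ∈ Φ

/-- The restriction of a type `Φ(x⃗)` to the single variable `x_j`. -/
def GFRestrict1 {m : ℕ} (Φ : Set (Fml × (ℕ → Fin m))) (j : Fin m) :
    Set (Fml × (ℕ → Fin 1)) :=
  {q | ∃ σ : ℕ → Fin m, (q.1, σ) ∈ Φ ∧ ∀ x ∈ q.1.free, σ x = j}

/-- A `K`-type is openGF-complete: any two pointed models of `K` realizing it
are connected guarded `sig(K)`-bisimilar. -/
def KB.OpenGFComplete (K : KB) {m : ℕ} (Φ : Set (Fml × (ℕ → Fin m))) : Prop :=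
  ∀ A B : Str, A.IsModel K → B.IsModel K → ∀ (a : Fin m → A.Dom) (b : Fin m → B.Dom),
    K.tpGF A a = Φ → K.tpGF B b = Φ → GBisimilar true K.sig A a B b

/-! ## K-types with explicit variable tuples, and witness sequences -/

/-- A `K`-type together with an explicit tuple of distinct variables. -/
structure GFTypeV : Type where
  m : ℕ
  xs : Fin m → ℕ
  xs_inj : Function.Injective xs
  Phi : Set (Fml × (ℕ → Fin m))

/-- The type `T` is satisfied under the assignment `μ` of its variables. -/
def GFTypeV.SatUnder (T : GFTypeV) (A : Str) (μ : ℕ → A.Dom) : Prop :=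
  ∀ p ∈ T.Phi, p.1.Sat A fun x => μ (T.xs (p.2 x))

/-- `T` is a `K`-type. -/
def GFTypeV.IsTypeOf (T : GFTypeV) (K : KB) : Prop := K.IsGFTypeAt T.Phi

/-- Two types (with explicit variables) are coherent: some model of `K`
satisfies their union under a common assignment. -/
def GFCoherent (K : KB) (T₁ T₂ : GFTypeV) : Prop :=
  ∃ A : Str, A.IsModel K ∧ ∃ μ : ℕ → A.Dom, T₁.SatUnder A μ ∧ T₂.SatUnder A μ

/-- The sequence `Φ₀(x⃗₀),…,Φ_{n+1}(x⃗_{n+1})` witnesses openGF-incompleteness of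
the `K`-type `Φ(x)` with one free variable. -/
def GFWitSeq (K : KB) (Φ : Set (Fml × (ℕ → Fin 1))) (n : ℕ)
    (Ts : Fin (n + 2) → GFTypeV) : Prop :=
  (∃ j : Fin (Ts 0).m, GFRestrict1 (Ts 0).Phi j = Φ) ∧
  (∀ i : Fin (n + 2), (Ts i).IsTypeOf K ∧ GFTypeGuarded (Ts i).Phi ∧ GFTypeNonUnary (Ts i).Phi) ∧
  (∀ i : Fin (n + 1),
    (Set.range (Ts i.castSucc).xs ∩ Set.range (Ts i.succ).xs).Nonempty) ∧
  (∀ i : Fin (n + 1), GFCoherent K (Ts i.castSucc) (Ts i.succ)) ∧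
  ∃ A : Str, A.IsModel K ∧ ∃ μ : ℕ → A.Dom,
    (Ts ⟨n, by omega⟩).SatUnder A μ ∧
    ¬ ∃ μ' : ℕ → A.Dom,
        (∀ x, x ∈ Set.range (Ts ⟨n, by omega⟩).xs → x ∈ Set.range (Ts ⟨n + 1, by omega⟩).xs →
          μ' x = μ x) ∧
        (Ts ⟨n + 1, by omega⟩).SatUnder A μ'

/-! ## Relativization and finite controllability -/

/-- `L` has the relativization property. -/
def RelativizationProperty (L : Set Fml) : Prop :=
  ∀ φ ∈ L, φ.free = ∅ → ∀ c : ℕ, ((1 : ℕ), c) ∉ φ.sig →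
    ∃ φ' ∈ L, φ'.free = ∅ ∧ ∀ (B : Str) (v : ℕ → B.Dom),
      (φ'.Sat B v ↔ φ.SatIn B {d | B.rel 1 c ![d]} v)

/-- Evaluating queries from `Q` is finitely controllable on `L`-KBs. -/
def FinitelyControllable (Q L : Set Fml) : Prop :=
  ∀ K : KB, (∀ φ ∈ K.onto, φ ∈ L) → (∀ φ ∈ K.onto, φ.free = ∅) →
  ∀ (n : ℕ) (q : Fml), q ∈ Q → (∀ m ∈ q.free, m < n) →
  ∀ c : Fin n → ℕ,
  (∃ A : Str, A.IsModel K ∧ ∃ v : ℕ → A.Dom,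
      (∀ i : Fin n, v i.1 = A.const (c i)) ∧ ¬ q.Sat A v) →
  ∃ A : Str, Finite A.Dom ∧ A.IsModel K ∧ ∃ v : ℕ → A.Dom,
      (∀ i : Fin n, v i.1 = A.const (c i)) ∧ ¬ q.Sat A v


/-! ## Auxiliary lemmas for Statement 11 -/

section Statement11Aux
open Classical

lemma fin1_ext {α : Type*} (f : Fin 1 → α) : f = ![f 0] := by
  funext i; fin_cases i <;> rfl

lemma fin2_ext {α : Type*} (f : Fin 2 → α) : f = ![f 0, f 1] := by
  funext i; fin_cases i <;> rfl

lemma Concept.sat_toFml (C : Concept) (A : Str) :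
    ∀ x, (x = 0 ∨ x = 1) → ∀ v : ℕ → A.Dom,
      ((C.toFml x).Sat A v ↔ v x ∈ C.interp A) := by
  induction C with
  | top =>
    intro x hx v
    simp [Concept.toFml, Concept.interp, Fml.Sat]
  | atom c =>
    intro x hx v
    show A.rel 1 c (fun i => v (![x] i)) ↔ A.rel 1 c ![v x]
    have : (fun i => v (![x] i)) = ![v x] := by
      funext i; fin_cases i <;> rfl
    rw [this]
  | neg C ih =>
    intro x hx v
    show ¬ _ ↔ _
    rw [ih x hx v]
    rfl
  | inter C D ihC ihD =>
    intro x hx v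
    show _ ∧ _ ↔ _
    rw [ihC x hx v, ihD x hx v]
    rfl
  | exRole inv R C ih =>
    intro x hx v
    have hx' : (1 - x = 0 ∨ 1 - x = 1) := by rcases hx with h | h <;> subst h <;> simp
    have hxx : 1 - x ≠ x := by rcases hx with h | h <;> subst h <;> simp
    show (∃ d : A.Dom, Fml.Sat A (.and _ (C.toFml (1-x))) (Function.update v (1-x) d)) ↔ _
    constructor
    · rintro ⟨d, hrole, hC⟩
      rw [ih (1-x) hx' _] at hC
      rw [Function.update_self] at hC
      refine ⟨d, hC, ?_⟩
      cases inv with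
      | false =>
        have : A.rel 2 R (fun i => Function.update v (1-x) d (![x, 1-x] i)) := hrole
        have heq : (fun i => Function.update v (1-x) d (![x, 1-x] i)) = ![v x, d] := by
          funext i; fin_cases i
          · simp [Function.update_of_ne hxx.symm]
          · simp
        rw [heq] at this
        simpa using this
      | true =>
        have : A.rel 2 R (fun i => Function.update v (1-x) d (![1-x, x] i)) := hrole
        have heq : (fun i => Function.update v (1-x) d (![1-x, x] i)) = ![d, v x] := by
          funext i; fin_cases i
          · simp
          · simp [Function.update_of_ne hxx.symm]
        rw [heq] at this
        simpa using this
    · rintro ⟨e, he, hrel⟩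
      refine ⟨e, ?_, ?_⟩
      · cases inv with
        | false =>
          show A.rel 2 R (fun i => Function.update v (1-x) e (![x, 1-x] i))
          have heq : (fun i => Function.update v (1-x) e (![x, 1-x] i)) = ![v x, e] := by
            funext i; fin_cases i
            · simp [Function.update_of_ne hxx.symm]
            · simp
          rw [heq]
          simpa using hrel
        | true =>
          show A.rel 2 R (fun i => Function.update v (1-x) e (![1-x, x] i))
          have heq : (fun i => Function.update v (1-x) e (![1-x, x] i)) = ![e, v x] := by
            funext i; fin_cases i
            · simp
            · simp [Function.update_of_ne hxx.symm]
          rw [heq]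
          simpa using hrel
      · rw [ih (1-x) hx' _, Function.update_self]
        exact he

lemma sat_CIfml (C D : Concept) (A : Str) (v : ℕ → A.Dom) :
    (CIfml (C, D)).Sat A v ↔ C.interp A ⊆ D.interp A := by
  show (∀ d1 : A.Dom, ∀ d0 : A.Dom, _) ↔ _
  constructor
  · intro h d hd
    obtain ⟨d1⟩ := A.dom_nonempty
    have := h d1 d
    rcases this with hneg | hpos
    · exfalso
      apply hneg
      rw [Concept.sat_toFml C A 0 (Or.inl rfl)]
      simpa using hd
    · have := (Concept.sat_toFml D A 0 (Or.inl rfl) _).mp hpos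
      simpa using this
  · intro h d1 d0
    by_cases hC : d0 ∈ C.interp A
    · right
      rw [Concept.sat_toFml D A 0 (Or.inl rfl)]
      simpa using h hC
    · left
      intro hsat
      apply hC
      have := (Concept.sat_toFml C A 0 (Or.inl rfl) _).mp hsat
      simpa using this

lemma isModel_toKB_iff (A : Str) (K : ALCIKB) :
    A.IsModel K.toKB ↔
      ((∀ p ∈ K.onto, p.1.interp A ⊆ p.2.interp A) ∧
        ∀ a ∈ K.db.atoms, a.Holds A A.const) := by
  constructor
  · rintro ⟨h1, h2⟩
    refine ⟨?_, h2⟩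
    intro p hp
    obtain ⟨d⟩ := A.dom_nonempty
    have := h1 (CIfml p) ⟨p, hp, rfl⟩ (fun _ => d)
    exact (sat_CIfml p.1 p.2 A _).mp this
  · rintro ⟨h1, h2⟩
    refine ⟨?_, h2⟩
    rintro φ ⟨p, hp, rfl⟩ v
    exact (sat_CIfml p.1 p.2 A v).mpr (h1 p hp)

lemma Concept.mem_subconcepts_self (C : Concept) : C ∈ C.subconcepts := by
  cases C <;> simp [Concept.subconcepts]

lemma Concept.subconcepts_trans {C D : Concept} (h : D ∈ C.subconcepts) :
    D.subconcepts ⊆ C.subconcepts := by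
  induction C with
  | top => simp [Concept.subconcepts] at h; subst h; exact subset_rfl
  | atom c => simp [Concept.subconcepts] at h; subst h; exact subset_rfl
  | neg C ih =>
    rcases h with h | h
    · subst h; exact subset_rfl
    · exact (ih h).trans (Set.subset_insert _ _)
  | inter C C' ih ih' =>
    rcases h with h | h
    · subst h; exact subset_rfl
    · rcases h with h | h
      · exact ((ih h).trans Set.subset_union_left).trans (Set.subset_insert _ _)
      · exact ((ih' h).trans Set.subset_union_right).trans (Set.subset_insert _ _)
  | exRole i R C ih =>
    rcases h with h | h
    · subst h; exact subset_rfl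
    · exact (ih h).trans (Set.subset_insert _ _)

lemma Concept.subconcepts_finite (C : Concept) : C.subconcepts.Finite := by
  induction C with
  | top => exact Set.finite_singleton _
  | atom c => exact Set.finite_singleton _
  | neg C ih => exact ih.insert _
  | inter C D ihC ihD => exact (ihC.union ihD).insert _
  | exRole i R C ih => exact ih.insert _

/-- Conjunction of a list of concepts. -/
def cconj : List Concept → Concept
  | [] => .top
  | C :: l => .inter C (cconj l)

lemma mem_interp_cconj {A : Str} {d : A.Dom} :
    ∀ l : List Concept, d ∈ (cconj l).interp A ↔ ∀ C ∈ l, d ∈ C.interp A := by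
  intro l
  induction l with
  | nil => simp [cconj, Concept.interp]
  | cons C l ih =>
    show d ∈ C.interp A ∧ d ∈ (cconj l).interp A ↔ _
    rw [ih]; simp

/-- Disjunction of a list of concepts. -/
def cdisj (l : List Concept) : Concept := .neg (cconj (l.map .neg))

lemma mem_interp_cdisj {A : Str} {d : A.Dom} (l : List Concept) :
    d ∈ (cdisj l).interp A ↔ ∃ C ∈ l, d ∈ C.interp A := by
  show ¬ _ ↔ _
  rw [mem_interp_cconj]
  constructor
  · intro h
    by_contra hne
    push_neg at hne
    apply h
    intro C hC
    simp only [List.mem_map] at hC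
    obtain ⟨C', hC', rfl⟩ := hC
    exact hne C' hC'
  · rintro ⟨C, hC, hd⟩ h
    exact h (.neg C) (List.mem_map_of_mem hC) hd

lemma csig_cconj {S : Set (ℕ × ℕ)} :
    ∀ l : List Concept, (∀ C ∈ l, C.csig ⊆ S) → (cconj l).csig ⊆ S := by
  intro l
  induction l with
  | nil => intro _; simp [cconj, Concept.csig]
  | cons C l ih =>
    intro h
    show C.csig ∪ (cconj l).csig ⊆ S
    exact Set.union_subset (h C (by simp)) (ih fun C hC => h C (by simp [hC]))

lemma csig_cdisj {S : Set (ℕ × ℕ)} (l : List Concept) (h : ∀ C ∈ l, C.csig ⊆ S) :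
    (cdisj l).csig ⊆ S := by
  apply csig_cconj
  intro C hC
  simp only [List.mem_map] at hC
  obtain ⟨C', hC', rfl⟩ := hC
  exact h C' hC'

lemma Fml.sig_finite (φ : Fml) : φ.sig.Finite := by
  induction φ with
  | eq x y => exact Set.finite_empty
  | rel k R v => exact Set.finite_singleton _
  | neg φ ih => exact ih
  | and φ ψ ih ih' => exact ih.union ih'
  | or φ ψ ih ih' => exact ih.union ih'
  | ex y φ ih => exact ih
  | all y φ ih => exact ih

lemma KB.sig_finite (K : KB) : K.sig.Finite := by
  apply Set.Finite.union
  · exact K.onto_finite.biUnion fun φ _ => φ.sig_finite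
  · exact K.db.finite.image _

lemma ALCIKB.sigK_finite (K : ALCIKB) : K.sigK.Finite := by
  apply KB.sig_finite

lemma mem_interp_exRole {A : Str} {d : A.Dom} {i : Bool} {R : ℕ} {C : Concept} :
    d ∈ (Concept.exRole i R C).interp A ↔
      ∃ e ∈ C.interp A, roleHolds A (i, R) d e := Iff.rfl

lemma roleHolds_roleEdge {A : Str} {ρ : Bool × ℕ} {d e : A.Dom}
    (h : roleHolds A ρ d e) : A.RoleEdge d e := by
  unfold roleHolds at h
  rcases ρ with ⟨i, R⟩
  cases i
  · exact ⟨R, Or.inl h⟩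
  · exact ⟨R, Or.inr h⟩

/-- Bisimulation invariance of concepts. -/
lemma bisim_invariance {sg : Set (ℕ × ℕ)} {A B : Str} {S : Set (A.Dom × B.Dom)}
    (hS : IsALCIBisim sg A B S) (C : Concept) (hC : C.csig ⊆ sg) :
    ∀ p ∈ S, (p.1 ∈ C.interp A ↔ p.2 ∈ C.interp B) := by
  induction C with
  | top => intro p hp; simp [Concept.interp]
  | atom c =>
    intro p hp
    exact hS.atom p hp c (hC (by simp [Concept.csig]))
  | neg C ih =>
    intro p hp
    exact not_congr (ih hC p hp)
  | inter C D ihC ihD =>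
    intro p hp
    exact and_congr (ihC (fun x hx => hC (Set.mem_union_left _ hx)) p hp)
      (ihD (fun x hx => hC (Set.mem_union_right _ hx)) p hp)
  | exRole i R C ih =>
    intro p hp
    have hR : ((2:ℕ), R) ∈ sg := hC (by simp [Concept.csig])
    have hCs : C.csig ⊆ sg := fun x hx => hC (by simp [Concept.csig, hx])
    rw [mem_interp_exRole, mem_interp_exRole]
    constructor
    · rintro ⟨e, he, hrole⟩
      obtain ⟨e', hrole', hmem⟩ := hS.forth p hp (i, R) hR e hrole
      exact ⟨e', (ih hCs (e, e') hmem).mp he, hrole'⟩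
    · rintro ⟨e, he, hrole⟩
      obtain ⟨e', hrole', hmem⟩ := hS.back p hp (i, R) hR e hrole
      exact ⟨e', (ih hCs (e', e) hmem).mpr he, hrole'⟩

end Statement11Aux

/-! ### Unraveling into a forest model -/

section Unravel
open Classical

/-- Paths for the unraveling: a root element, or a child labeled by a role and a concept. -/
inductive UPath (α : Type) : Type where
  | root : α → UPath α
  | child : UPath α → Bool → ℕ → Concept → UPath α

def UPath.depth {α : Type} : UPath α → ℕ
  | root _ => 0
  | child p _ _ _ => p.depth + 1

def UPath.rootOf {α : Type} : UPath α → α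
  | root d => d
  | child p _ _ _ => p.rootOf

lemma UPath.child_ne {α : Type} (p : UPath α) (i : Bool) (R : ℕ) (E : Concept) :
    UPath.child p i R E ≠ p := by
  intro h
  have := congrArg UPath.depth h
  simp only [UPath.depth] at this
  omega

variable (K : ALCIKB) (A₀ : Str) (cl : Set Concept)

/-- Witness choice for existential concepts. -/
noncomputable def uwit (d : A₀.Dom) (i : Bool) (R : ℕ) (E : Concept) : A₀.Dom :=
  if h : d ∈ (Concept.exRole i R E).interp A₀ then h.choose else d

lemma uwit_spec {d : A₀.Dom} {i : Bool} {R : ℕ} {E : Concept}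
    (h : d ∈ (Concept.exRole i R E).interp A₀) :
    uwit A₀ d i R E ∈ E.interp A₀ ∧ roleHolds A₀ (i, R) d (uwit A₀ d i R E) := by
  rw [uwit, dif_pos h]
  exact ⟨h.choose_spec.1, h.choose_spec.2⟩

noncomputable def ulast : UPath A₀.Dom → A₀.Dom
  | .root d => d
  | .child p i R E => uwit A₀ (ulast p) i R E

def UValid : UPath A₀.Dom → Prop
  | .root d => ∃ c ∈ K.db.consts, d = A₀.const c
  | .child p i R E => UValid p ∧ Concept.exRole i R E ∈ cl ∧
      ulast A₀ p ∈ (Concept.exRole i R E).interp A₀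

def UDom := {p : UPath A₀.Dom // UValid K A₀ cl p}

/-- Role edges of the unraveling. -/
def REdge (R : ℕ) (p q : UDom K A₀ cl) : Prop :=
  (∃ x y, (⟨2, R, ![x, y]⟩ : Atom) ∈ K.db.atoms ∧
    p.1 = UPath.root (A₀.const x) ∧ q.1 = UPath.root (A₀.const y)) ∨
  (∃ E, q.1 = UPath.child p.1 false R E) ∨
  (∃ E, p.1 = UPath.child q.1 true R E)

def urel : (k : ℕ) → ℕ → (Fin k → UDom K A₀ cl) → Prop
  | 1, c, t => A₀.rel 1 c ![ulast A₀ (t 0).1]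
  | 2, R, t => REdge K A₀ cl R (t 0) (t 1)
  | _, _, _ => False

variable (b : ℕ)

noncomputable def unravel (hb : b ∈ K.db.consts) : Str where
  Dom := UDom K A₀ cl
  dom_nonempty := ⟨⟨UPath.root (A₀.const b), ⟨b, hb, rfl⟩⟩⟩
  rel := urel K A₀ cl
  const := fun c => if h : c ∈ K.db.consts then ⟨UPath.root (A₀.const c), ⟨c, h, rfl⟩⟩
    else ⟨UPath.root (A₀.const b), ⟨b, hb, rfl⟩⟩

variable {K A₀ cl b}

lemma urel2_pair {R : ℕ} (p q : UDom K A₀ cl) :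
    urel K A₀ cl 2 R ![p, q] ↔ REdge K A₀ cl R p q := by
  show REdge K A₀ cl R (![p, q] 0) (![p, q] 1) ↔ _
  rw [Matrix.cons_val_zero, Matrix.cons_val_one, Matrix.cons_val_zero]

lemma urel1_pair {c : ℕ} (p : UDom K A₀ cl) :
    urel K A₀ cl 1 c ![p] ↔ A₀.rel 1 c ![ulast A₀ p.1] := by
  show A₀.rel 1 c ![ulast A₀ ((![p]) 0).1] ↔ _
  rw [Matrix.cons_val_zero]

lemma REdge_rel {R : ℕ} {p q : UDom K A₀ cl} (hA₀ : A₀.IsModel K.toKB)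
    (h : REdge K A₀ cl R p q) :
    A₀.rel 2 R ![ulast A₀ p.1, ulast A₀ q.1] := by
  rcases h with ⟨x, y, hat, hp, hq⟩ | ⟨E, hq⟩ | ⟨E, hp⟩
  · have hh := hA₀.2 _ hat
    have heq : (fun i => A₀.const ((![x, y]) i)) = ![A₀.const x, A₀.const y] := by
      funext i; fin_cases i <;> rfl
    have hh' : A₀.rel 2 R ![A₀.const x, A₀.const y] := by
      rw [← heq]; exact hh
    rw [hp, hq]
    exact hh'
  · have hv := q.2
    rw [hq] at hv
    obtain ⟨hv1, hv2, hv3⟩ : UValid K A₀ cl p.1 ∧ _ ∧ _ := hv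
    have hw := uwit_spec A₀ hv3
    have hlast : ulast A₀ q.1 = uwit A₀ (ulast A₀ p.1) false R E := by rw [hq]; rfl
    rw [hlast]
    exact hw.2
  · have hv := p.2
    rw [hp] at hv
    obtain ⟨hv1, hv2, hv3⟩ : UValid K A₀ cl q.1 ∧ _ ∧ _ := hv
    have hw := uwit_spec A₀ hv3
    have hlast : ulast A₀ p.1 = uwit A₀ (ulast A₀ q.1) true R E := by rw [hp]; rfl
    rw [hlast]
    exact hw.2

lemma unravel_interp (hb : b ∈ K.db.consts) (hA₀ : A₀.IsModel K.toKB)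
    (hcl : ∀ D ∈ cl, D.subconcepts ⊆ cl) :
    ∀ E, E ∈ cl → ∀ p : UDom K A₀ cl,
      (p ∈ E.interp (unravel K A₀ cl b hb) ↔ ulast A₀ p.1 ∈ E.interp A₀) := by
  intro E
  induction E with
  | top => intro _ p; simp [Concept.interp]; trivial
  | atom c =>
    intro _ p
    exact urel1_pair p
  | neg E ih =>
    intro h p
    have hE : E ∈ cl := hcl _ h (by
      show E ∈ insert (Concept.neg E) E.subconcepts
      exact Set.mem_insert_iff.mpr (Or.inr (Concept.mem_subconcepts_self E)))
    exact not_congr (ih hE p)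
  | inter E F ihE ihF =>
    intro h p
    have hE : E ∈ cl := hcl _ h (by
      show E ∈ insert (Concept.inter E F) (E.subconcepts ∪ F.subconcepts)
      exact Set.mem_insert_iff.mpr (Or.inr (Or.inl (Concept.mem_subconcepts_self E))))
    have hF : F ∈ cl := hcl _ h (by
      show F ∈ insert (Concept.inter E F) (E.subconcepts ∪ F.subconcepts)
      exact Set.mem_insert_iff.mpr (Or.inr (Or.inr (Concept.mem_subconcepts_self F))))
    exact and_congr (ihE hE p) (ihF hF p)
  | exRole i R E ih =>
    intro h p
    have hE : E ∈ cl := hcl _ h (by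
      show E ∈ insert (Concept.exRole i R E) E.subconcepts
      exact Set.mem_insert_iff.mpr (Or.inr (Concept.mem_subconcepts_self E)))
    constructor
    · rintro ⟨q, hq, hrole⟩
      refine ⟨ulast A₀ q.1, (ih hE q).mp hq, ?_⟩
      cases i with
      | false =>
        have : REdge K A₀ cl R p q := (urel2_pair p q).mp hrole
        exact REdge_rel hA₀ this
      | true =>
        have : REdge K A₀ cl R q p := (urel2_pair q p).mp hrole
        exact REdge_rel hA₀ this
    · intro hint'
      have hint : ulast A₀ p.1 ∈ (Concept.exRole i R E).interp A₀ := hint'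
      refine ⟨⟨UPath.child p.1 i R E, ⟨p.2, h, hint⟩⟩, ?_, ?_⟩
      · refine (ih hE _).mpr ?_
        exact (uwit_spec A₀ hint).1
      · cases i with
        | false =>
          show urel K A₀ cl 2 R ![p, _]
          refine (urel2_pair _ _).mpr ?_
          exact Or.inr (Or.inl ⟨E, rfl⟩)
        | true =>
          show urel K A₀ cl 2 R ![_, p]
          refine (urel2_pair _ _).mpr ?_
          exact Or.inr (Or.inr ⟨E, rfl⟩)

lemma unravel_isModel (hb : b ∈ K.db.consts) (hA₀ : A₀.IsModel K.toKB)
    (hcl : ∀ D ∈ cl, D.subconcepts ⊆ cl)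
    (honto : ∀ pr ∈ K.onto, pr.1 ∈ cl ∧ pr.2 ∈ cl) :
    (unravel K A₀ cl b hb).IsModel K.toKB := by
  rw [isModel_toKB_iff]
  constructor
  · intro pr hpr x hx
    have h1 := (unravel_interp hb hA₀ hcl pr.1 (honto pr hpr).1 x).mp hx
    have h2 := ((isModel_toKB_iff A₀ K).mp hA₀).1 pr hpr h1
    exact (unravel_interp hb hA₀ hcl pr.2 (honto pr hpr).2 x).mpr h2
  · intro a ha
    obtain ⟨k, r, args⟩ := a
    rcases K.db_arity _ ha with h1 | h2
    · dsimp at h1; subst h1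
      have hc : args 0 ∈ K.db.consts := Set.mem_biUnion ha ⟨0, rfl⟩
      show urel K A₀ cl 1 r (fun i => (unravel K A₀ cl b hb).const (args i))
      show A₀.rel 1 r ![ulast A₀ ((unravel K A₀ cl b hb).const (args 0)).1]
      have hcon : ((unravel K A₀ cl b hb).const (args 0)).1
          = UPath.root (A₀.const (args 0)) := by
        show (if h : args 0 ∈ K.db.consts then
          (⟨UPath.root (A₀.const (args 0)), _⟩ : UDom K A₀ cl) else _).1 = _
        rw [dif_pos hc]
      rw [hcon]
      have hh := hA₀.2 _ ha
      have heq : (fun i : Fin 1 => A₀.const (args i)) = ![A₀.const (args 0)] := by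
        funext i; fin_cases i <;> rfl
      show A₀.rel 1 r ![A₀.const (args 0)]
      rw [← heq]
      exact hh
    · dsimp at h2; subst h2
      have hc0 : args 0 ∈ K.db.consts := Set.mem_biUnion ha ⟨0, rfl⟩
      have hc1 : args 1 ∈ K.db.consts := Set.mem_biUnion ha ⟨1, rfl⟩
      have hargs : ![args 0, args 1] = args := by funext i; fin_cases i <;> rfl
      show urel K A₀ cl 2 r (fun i => (unravel K A₀ cl b hb).const (args i))
      show REdge K A₀ cl r ((unravel K A₀ cl b hb).const (args 0))
        ((unravel K A₀ cl b hb).const (args 1))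
      have hcon0 : ((unravel K A₀ cl b hb).const (args 0)).1
          = UPath.root (A₀.const (args 0)) := by
        show (if h : args 0 ∈ K.db.consts then
          (⟨UPath.root (A₀.const (args 0)), _⟩ : UDom K A₀ cl) else _).1 = _
        rw [dif_pos hc0]
      have hcon1 : ((unravel K A₀ cl b hb).const (args 1)).1
          = UPath.root (A₀.const (args 1)) := by
        show (if h : args 1 ∈ K.db.consts then
          (⟨UPath.root (A₀.const (args 1)), _⟩ : UDom K A₀ cl) else _).1 = _
        rw [dif_pos hc1]
      refine Or.inl ⟨args 0, args 1, ?_, hcon0, hcon1⟩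
      rw [hargs]
      exact ha

end Unravel

lemma acyclic_of_unique_low {V : Type} (G : SimpleGraph V) (hh : V → ℕ)
    (hpar : ∀ d e e', G.Adj d e → G.Adj d e' → hh e ≤ hh d → hh e' ≤ hh d → e = e') :
    G.IsAcyclic := by
  classical
  intro v c hc
  have hvne : v ∈ c.support := c.start_mem_support
  obtain ⟨u, hu, hmax⟩ := c.support.toFinset.exists_max_image hh
    ⟨v, List.mem_toFinset.mpr hvne⟩
  have hu' : u ∈ c.support := List.mem_toFinset.mp hu
  have hmax' : ∀ x ∈ (c.rotate u hu').support, hh x ≤ hh u := by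
    intro x hx
    rcases (SimpleGraph.Walk.mem_support_iff (c.rotate u hu')).mp hx with rfl | hx'
    · exact le_rfl
    · have h1 : x ∈ c.support.tail :=
        (SimpleGraph.Walk.support_rotate c u hu').mem_iff.mp hx'
      exact hmax x (List.mem_toFinset.mpr (List.mem_of_mem_tail h1))
  have hcyc := hc.rotate hu'
  revert hcyc hmax'
  generalize c.rotate u hu' = c'
  intro hmax' hcyc
  cases c' with
  | nil => exact hcyc.ne_nil rfl
  | @cons _ a _ h₁ q =>
    obtain ⟨qr, rfl⟩ : ∃ qr : G.Walk u a, q = qr.reverse := ⟨q.reverse, (q.reverse_reverse).symm⟩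
    cases qr with
    | nil => exact G.irrefl h₁
    | @cons _ bb _ h₂ r =>
      -- h₂ : G.Adj u bb
      have hbmem : bb ∈ (SimpleGraph.Walk.cons h₂ r).reverse.support := by
        rw [SimpleGraph.Walk.support_reverse]
        simp [SimpleGraph.Walk.support_cons]
      have hb_le : hh bb ≤ hh u := by
        apply hmax'
        rw [SimpleGraph.Walk.support_cons]
        exact List.mem_cons_of_mem _ hbmem
      have ha_le : hh a ≤ hh u := by
        apply hmax'
        rw [SimpleGraph.Walk.support_cons]
        exact List.mem_cons_of_mem _ (SimpleGraph.Walk.start_mem_support _)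
      have hab : a = bb := hpar u a bb h₁ h₂ ha_le hb_le
      subst hab
      have hedge : s(u, a) ∈ (SimpleGraph.Walk.cons h₂ r).reverse.edges := by
        rw [SimpleGraph.Walk.edges_reverse]
        simp [SimpleGraph.Walk.edges_cons]
      have hnodup := hcyc.isCircuit.isTrail.edges_nodup
      rw [SimpleGraph.Walk.edges_cons] at hnodup
      exact (List.nodup_cons.mp hnodup).1 hedge

section ForestFacts

open Classical

variable {K : ALCIKB} {A₀ : Str} {cl : Set Concept} {b : ℕ}

lemma uconst_val (hb : b ∈ K.db.consts) {c : ℕ} (hc : c ∈ K.db.consts) :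
    (((unravel K A₀ cl b hb).const c)).1 = UPath.root (A₀.const c) := by
  show ((if h : c ∈ K.db.consts then ⟨UPath.root (A₀.const c), _⟩ else _ : UDom K A₀ cl)).1 = _
  exact congrArg Subtype.val (dif_pos hc)

lemma uconst_isRoot (hb : b ∈ K.db.consts) (c : ℕ) :
    ∃ dd, (((unravel K A₀ cl b hb).const c)).1 = UPath.root dd := by
  by_cases hc : c ∈ K.db.consts
  · exact ⟨A₀.const c, uconst_val hb hc⟩
  · refine ⟨A₀.const b, ?_⟩
    show ((if h : c ∈ K.db.consts then ⟨UPath.root (A₀.const c), _⟩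
      else ⟨UPath.root (A₀.const b), _⟩ : UDom K A₀ cl)).1 = _
    exact congrArg Subtype.val (dif_neg hc)

lemma uDbEdge_of_root (hb : b ∈ K.db.consts) {R x y : ℕ} {p q : UDom K A₀ cl}
    (hat : (⟨2, R, ![x, y]⟩ : Atom) ∈ K.db.atoms)
    (hp : p.1 = UPath.root (A₀.const x)) (hq : q.1 = UPath.root (A₀.const y)) :
    (unravel K A₀ cl b hb).DbEdge K p q := by
  have hcx : x ∈ K.db.consts := Set.mem_biUnion hat ⟨0, by simp⟩
  have hcy : y ∈ K.db.consts := Set.mem_biUnion hat ⟨1, by simp⟩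
  refine ⟨R, x, y, hat, ?_, ?_⟩
  · exact Subtype.ext (by rw [hp, uconst_val hb hcx])
  · exact Subtype.ext (by rw [hq, uconst_val hb hcy])

lemma unravel_adj_char (hb : b ∈ K.db.consts) {p q : UDom K A₀ cl}
    (h : (((unravel K A₀ cl b hb)).forestGraph K).Adj p q) :
    (∃ i R E, q.1 = UPath.child p.1 i R E) ∨ (∃ i R E, p.1 = UPath.child q.1 i R E) := by
  obtain ⟨hne, ⟨R, hR⟩, hdb1, hdb2⟩ : p ≠ q ∧ (unravel K A₀ cl b hb).TreeEdge K p q := h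
  rcases hR with h | h
  · rcases (urel2_pair p q).mp h with ⟨x, y, hat, hp, hq⟩ | ⟨E, hq⟩ | ⟨E, hp⟩
    · exact absurd (uDbEdge_of_root hb hat hp hq) hdb1
    · exact Or.inl ⟨false, R, E, hq⟩
    · exact Or.inr ⟨true, R, E, hp⟩
  · rcases (urel2_pair q p).mp h with ⟨x, y, hat, hq, hp⟩ | ⟨E, hp⟩ | ⟨E, hq⟩
    · exact absurd (uDbEdge_of_root hb hat hq hp) hdb2
    · exact Or.inr ⟨false, R, E, hp⟩
    · exact Or.inl ⟨true, R, E, hq⟩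

lemma unravel_isForest (hb : b ∈ K.db.consts) (hA₀ : A₀.IsModel K.toKB)
    (hcl : ∀ D ∈ cl, D.subconcepts ⊆ cl)
    (honto : ∀ pr ∈ K.onto, pr.1 ∈ cl ∧ pr.2 ∈ cl) :
    (unravel K A₀ cl b hb).IsForestModel K := by
  refine ⟨unravel_isModel hb hA₀ hcl honto, ?_, ?_, ?_, ?_, ?_⟩
  · -- arities
    intro k R t h
    rcases k with _ | _ | _ | k
    · exact h.elim
    · exact Or.inl rfl
    · exact Or.inr rfl
    · exact h.elim
  · -- self loops
    rintro d ⟨R, h | h⟩ <;>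
    · rcases (urel2_pair d d).mp h with ⟨x, y, hat, hp, hq⟩ | ⟨E, hq⟩ | ⟨E, hp⟩
      · exact uDbEdge_of_root hb hat hp hq
      · exact absurd hq.symm (UPath.child_ne _ _ _ _)
      · exact absurd hp.symm (UPath.child_ne _ _ _ _)
  · -- acyclicity
    apply acyclic_of_unique_low _ (fun p => p.1.depth)
    intro d e e' h1 h2 hle1 hle2
    rcases unravel_adj_char hb h1 with ⟨i, R, E, hc⟩ | ⟨i, R, E, hc⟩
    · exfalso
      have := congrArg UPath.depth hc
      simp only [UPath.depth] at this
      omega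
    · rcases unravel_adj_char hb h2 with ⟨i', R', E', hc'⟩ | ⟨i', R', E', hc'⟩
      · exfalso
        have := congrArg UPath.depth hc'
        simp only [UPath.depth] at this
        omega
      · rw [hc] at hc'
        injection hc' with h1 h2 h3 h4
        exact Subtype.ext h1
  · -- reachability from constants
    have H : ∀ (pl : UPath A₀.Dom) (hv : UValid K A₀ cl pl), ∃ c ∈ K.db.consts,
        (((unravel K A₀ cl b hb)).forestGraph K).Reachable
          ((unravel K A₀ cl b hb).const c) ⟨pl, hv⟩ := by
      intro pl
      induction pl with
      | root dd =>
        intro hv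
        obtain ⟨c, hc, hdd⟩ := hv
        refine ⟨c, hc, ?_⟩
        have : (unravel K A₀ cl b hb).const c = ⟨UPath.root dd, ⟨c, hc, hdd⟩⟩ := by
          apply Subtype.ext
          rw [uconst_val hb hc]
          exact congrArg UPath.root hdd.symm
        rw [this]; exact SimpleGraph.Reachable.refl _
      | child p i R E ih =>
        intro hv
        obtain ⟨hv1, hv2, hv3⟩ : UValid K A₀ cl p ∧ _ ∧ _ := hv
        obtain ⟨c, hc, hreach⟩ := ih hv1
        refine ⟨c, hc, hreach.trans (SimpleGraph.Adj.reachable ?_)⟩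
        refine ⟨?_, ⟨R, ?_⟩, ?_, ?_⟩
        · intro hEq
          have := congrArg (fun z => (Subtype.val z)) hEq
          exact (UPath.child_ne p i R E) (this.symm)
        · cases i with
          | false => exact Or.inl ((urel2_pair _ _).mpr (Or.inr (Or.inl ⟨E, rfl⟩)))
          | true => exact Or.inr ((urel2_pair _ _).mpr (Or.inr (Or.inr ⟨E, rfl⟩)))
        · rintro ⟨R', x, y, hat, h1, h2⟩
          obtain ⟨dd, hdd⟩ := uconst_isRoot (A₀ := A₀) (cl := cl) hb y
          have := congrArg Subtype.val h2
          rw [hdd] at this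
          cases this
        · rintro ⟨R', x, y, hat, h1, h2⟩
          obtain ⟨dd, hdd⟩ := uconst_isRoot (A₀ := A₀) (cl := cl) hb x
          have := congrArg Subtype.val h1
          rw [hdd] at this
          cases this
    rintro ⟨pl, hv⟩
    exact H pl hv
  · -- separation of trees
    have hwalk : ∀ {d e : UDom K A₀ cl}
        (w : (((unravel K A₀ cl b hb)).forestGraph K).Walk d e),
        d.1.rootOf = e.1.rootOf := by
      intro d e w
      induction w with
      | nil => rfl
      | cons hadj w ih =>
        rename_i x y z
        have : x.1.rootOf = y.1.rootOf := by
          rcases unravel_adj_char hb hadj with ⟨i, R, E, hc⟩ | ⟨i, R, E, hc⟩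
          · rw [hc]; rfl
          · rw [hc]; rfl
        rw [this, ih]
    intro c hc c' hc' hne hreach
    obtain ⟨w⟩ := hreach
    have h1 := hwalk w
    rw [uconst_val hb hc, uconst_val hb hc'] at h1
    have h2 : A₀.const c = A₀.const c' := h1
    apply hne
    apply Subtype.ext
    rw [uconst_val hb hc, uconst_val hb hc', h2]

lemma unravel_finiteOutdegree (hb : b ∈ K.db.consts) (hclfin : cl.Finite) :
    (unravel K A₀ cl b hb).FiniteOutdegree := by
  intro d
  have hfin : (((fun c => (unravel K A₀ cl b hb).const c) '' K.db.consts) ∪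
      ((Subtype.val : UDom K A₀ cl → UPath A₀.Dom) ⁻¹'
        ((fun D => match D with
          | Concept.exRole i R E => UPath.child d.1 i R E
          | _ => d.1) '' cl)) ∪
      {e : UDom K A₀ cl | ∃ i R E, d.1 = UPath.child e.1 i R E}).Finite := by
    refine Set.Finite.union (Set.Finite.union ?_ ?_) ?_
    · exact K.db.consts_finite.image _
    · exact (hclfin.image _).preimage (Set.injOn_of_injective Subtype.val_injective)
    · apply Set.Subsingleton.finite
      rintro e ⟨i, R, E, he⟩ e' ⟨i', R', E', he'⟩
      rw [he] at he'
      injection he' with q1 q2 q3 q4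
      exact Subtype.ext q1
  apply hfin.subset
  rintro e ⟨R, h | h⟩
  · rcases (urel2_pair d e).mp h with ⟨x, y, hat, hp, hq⟩ | ⟨E, hq⟩ | ⟨E, hp⟩
    · left; left
      refine ⟨y, Set.mem_biUnion hat ⟨1, by simp⟩, ?_⟩
      apply Subtype.ext
      rw [uconst_val hb (Set.mem_biUnion hat ⟨1, by simp⟩), ← hq]
    · left; right
      have hv := e.2
      rw [hq] at hv
      obtain ⟨hv1, hv2, hv3⟩ : UValid K A₀ cl d.1 ∧ _ ∧ _ := hv
      exact ⟨Concept.exRole false R E, hv2, hq.symm⟩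
    · right
      exact ⟨true, R, E, hp⟩
  · rcases (urel2_pair e d).mp h with ⟨x, y, hat, hq, hp⟩ | ⟨E, hp⟩ | ⟨E, hq⟩
    · left; left
      refine ⟨x, Set.mem_biUnion hat ⟨0, by simp⟩, ?_⟩
      apply Subtype.ext
      rw [uconst_val hb (Set.mem_biUnion hat ⟨0, by simp⟩), ← hq]
    · right
      exact ⟨false, R, E, hp⟩
    · left; right
      have hv := e.2
      rw [hq] at hv
      obtain ⟨hv1, hv2, hv3⟩ : UValid K A₀ cl d.1 ∧ _ ∧ _ := hv
      exact ⟨Concept.exRole true R E, hv2, hq.symm⟩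

/-- The forward direction of Statement 11. -/
lemma statement11_forward (K : ALCIKB) (P : Set ℕ) (b : ℕ)
    (hb : b ∈ K.db.consts) (h : K.CSeparable P {b}) :
    ∃ A : Str, A.IsForestModel K ∧ A.FiniteOutdegree ∧
      ∀ a ∈ P, ¬ ∃ B : Str, B.IsModel K.toKB ∧
        ALCIBisimilar K.sigK B (B.const a) A (A.const b) := by
  obtain ⟨C, hsig, hpos, hneg⟩ := h
  have hb' := hneg b (Set.mem_singleton b)
  push_neg at hb'
  obtain ⟨A₀, hA₀mod, hA₀neg⟩ := hb'
  set cl : Set Concept :=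
    (⋃ p ∈ K.onto, p.1.subconcepts ∪ p.2.subconcepts) ∪ C.subconcepts with hcldef
  have hclfin : cl.Finite :=
    (K.onto_finite.biUnion fun p _ =>
      (p.1.subconcepts_finite.union p.2.subconcepts_finite)).union C.subconcepts_finite
  have hclcl : ∀ D ∈ cl, D.subconcepts ⊆ cl := by
    intro D hD
    rcases hD with hD | hD
    · simp only [Set.mem_iUnion] at hD
      obtain ⟨p, hp, hD⟩ := hD
      rcases hD with hD | hD
      · intro x hx
        exact Or.inl (Set.mem_biUnion hp (Or.inl (Concept.subconcepts_trans hD hx)))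
      · intro x hx
        exact Or.inl (Set.mem_biUnion hp (Or.inr (Concept.subconcepts_trans hD hx)))
    · intro x hx
      exact Or.inr (Concept.subconcepts_trans hD hx)
  have honto : ∀ pr ∈ K.onto, pr.1 ∈ cl ∧ pr.2 ∈ cl := by
    intro pr hpr
    constructor
    · exact Or.inl (Set.mem_biUnion hpr (Or.inl (Concept.mem_subconcepts_self _)))
    · exact Or.inl (Set.mem_biUnion hpr (Or.inr (Concept.mem_subconcepts_self _)))
  have hC : C ∈ cl := Or.inr (Concept.mem_subconcepts_self _)
  refine ⟨unravel K A₀ cl b hb, unravel_isForest hb hA₀mod hclcl honto,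
    unravel_finiteOutdegree hb hclfin, ?_⟩
  rintro a ha ⟨B, hB, S, hSbis, hmemS⟩
  have h1 : B.const a ∈ C.interp B := hpos a ha B hB
  have h2 : (unravel K A₀ cl b hb).const b ∈ C.interp (unravel K A₀ cl b hb) :=
    (bisim_invariance hSbis C hsig _ hmemS).mp h1
  have h3 := (unravel_interp hb hA₀mod hclcl C hC _).mp h2
  have h4 : ulast A₀ (((unravel K A₀ cl b hb).const b)).1 = A₀.const b := by
    rw [uconst_val hb hb]
    rfl
  rw [h4] at h3
  exact hA₀neg h3

end ForestFacts






/-! ### Level bisimulations and characteristic concepts -/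

section LevelBisim
open Classical

/-- `m`-bisimilarity between pointed structures. -/
def NBisim (sg : Set (ℕ × ℕ)) (B A : Str) : ℕ → B.Dom → A.Dom → Prop
  | 0, e, d => ∀ c, ((1 : ℕ), c) ∈ sg → (B.rel 1 c ![e] ↔ A.rel 1 c ![d])
  | m+1, e, d => (∀ c, ((1 : ℕ), c) ∈ sg → (B.rel 1 c ![e] ↔ A.rel 1 c ![d])) ∧
      (∀ ρ : Bool × ℕ, ((2 : ℕ), ρ.2) ∈ sg → ∀ e', roleHolds B ρ e e' →
        ∃ d', roleHolds A ρ d d' ∧ NBisim sg B A m e' d') ∧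
      (∀ ρ : Bool × ℕ, ((2 : ℕ), ρ.2) ∈ sg → ∀ d', roleHolds A ρ d d' →
        ∃ e', roleHolds B ρ e e' ∧ NBisim sg B A m e' d')

lemma NBisim.step_down {sg : Set (ℕ × ℕ)} {B A : Str} :
    ∀ {m : ℕ} {e : B.Dom} {d : A.Dom}, NBisim sg B A (m+1) e d → NBisim sg B A m e d := by
  intro m
  induction m with
  | zero => exact fun h => h.1
  | succ m ih =>
    rintro e d ⟨h0, hf, hb⟩
    refine ⟨h0, ?_, ?_⟩
    · intro ρ hρ e' he'
      obtain ⟨d', hd', hn⟩ := hf ρ hρ e' he'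
      exact ⟨d', hd', ih hn⟩
    · intro ρ hρ d' hd'
      obtain ⟨e', he', hn⟩ := hb ρ hρ d' hd'
      exact ⟨e', he', ih hn⟩

lemma NBisim.mono {sg : Set (ℕ × ℕ)} {B A : Str} {m n : ℕ} (h : m ≤ n)
    {e : B.Dom} {d : A.Dom} (hb : NBisim sg B A n e d) : NBisim sg B A m e d := by
  obtain ⟨k, rfl⟩ := Nat.exists_eq_add_of_le h
  clear h
  induction k with
  | zero => exact hb
  | succ k ih => exact ih (NBisim.step_down (m := m + k) hb)

lemma NBisim.refl (sg : Set (ℕ × ℕ)) (A : Str) : ∀ (m : ℕ) (d : A.Dom), NBisim sg A A m d d := by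
  intro m
  induction m with
  | zero => exact fun d c hc => Iff.rfl
  | succ m ih =>
    intro d
    exact ⟨fun c hc => Iff.rfl,
      fun ρ hρ e' he' => ⟨e', he', ih e'⟩,
      fun ρ hρ d' hd' => ⟨d', hd', ih d'⟩⟩

variable (sg : Set (ℕ × ℕ)) (hsg : sg.Finite)

noncomputable def u1List : List ℕ :=
  ((hsg.toFinset.filter (fun p => p.1 = 1)).toList).map Prod.snd

lemma mem_u1List {c : ℕ} : c ∈ u1List sg hsg ↔ ((1 : ℕ), c) ∈ sg := by
  constructor
  · intro hm
    simp only [u1List, List.mem_map, Finset.mem_toList, Finset.mem_filter,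
      Set.Finite.mem_toFinset] at hm
    obtain ⟨⟨x, y⟩, ⟨hmem, h1⟩, h2⟩ := hm
    dsimp at h1 h2
    subst h1; subst h2
    exact hmem
  · intro h
    simp only [u1List, List.mem_map, Finset.mem_toList, Finset.mem_filter,
      Set.Finite.mem_toFinset]
    exact ⟨(1, c), ⟨h, rfl⟩, rfl⟩

noncomputable def rhoList : List (Bool × ℕ) :=
  (((hsg.toFinset.filter (fun p => p.1 = 2)).toList).map Prod.snd).flatMap
    fun R => [(false, R), (true, R)]

lemma mem_rhoList {ρ : Bool × ℕ} : ρ ∈ rhoList sg hsg ↔ ((2 : ℕ), ρ.2) ∈ sg := by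
  constructor
  · intro hm
    simp only [rhoList, List.mem_flatMap, List.mem_map, Finset.mem_toList, Finset.mem_filter,
      Set.Finite.mem_toFinset] at hm
    obtain ⟨R, ⟨⟨x, y⟩, ⟨hmem, h1⟩, h2⟩, hρ⟩ := hm
    dsimp at h1 h2
    subst h1; subst h2
    simp only [List.mem_cons, List.not_mem_nil, or_false] at hρ
    rcases hρ with rfl | rfl <;> exact hmem
  · intro h
    simp only [rhoList, List.mem_flatMap, List.mem_map, Finset.mem_toList, Finset.mem_filter,
      Set.Finite.mem_toFinset]
    refine ⟨ρ.2, ⟨(2, ρ.2), ⟨h, rfl⟩, rfl⟩, ?_⟩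
    rcases ρ with ⟨i, R⟩
    cases i <;> simp

variable (A : Str) (hA : A.FiniteOutdegree)

noncomputable def succList (ρ : Bool × ℕ) (d : A.Dom) : List A.Dom :=
  (Set.Finite.subset (hA d) (fun e (he : roleHolds A ρ d e) => roleHolds_roleEdge he)).toFinset.toList

lemma mem_succList {ρ : Bool × ℕ} {d e : A.Dom} :
    e ∈ succList A hA ρ d ↔ roleHolds A ρ d e := by
  rw [succList, Finset.mem_toList]
  exact Set.Finite.mem_toFinset _

noncomputable def atomsC (d : A.Dom) : Concept :=
  cconj ((u1List sg hsg).map fun c =>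
    if A.rel 1 c ![d] then Concept.atom c else .neg (.atom c))

lemma mem_interp_atomsC {B : Str} {e : B.Dom} {d : A.Dom} :
    e ∈ (atomsC sg hsg A d).interp B ↔
      ∀ c, ((1 : ℕ), c) ∈ sg → (B.rel 1 c ![e] ↔ A.rel 1 c ![d]) := by
  rw [atomsC, mem_interp_cconj]
  constructor
  · intro h c hc
    have := h _ (List.mem_map_of_mem ((mem_u1List sg hsg).mpr hc))
    by_cases hd : A.rel 1 c ![d]
    · rw [if_pos hd] at this
      exact ⟨fun _ => hd, fun _ => this⟩
    · rw [if_neg hd] at this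
      exact ⟨fun hb => absurd hb this, fun ha => absurd ha hd⟩
  · intro h C hC
    obtain ⟨c, hcl, rfl⟩ := List.mem_map.mp hC
    have hc := (mem_u1List sg hsg).mp hcl
    by_cases hd : A.rel 1 c ![d]
    · rw [if_pos hd]
      exact (h c hc).mpr hd
    · rw [if_neg hd]
      exact fun hb => hd ((h c hc).mp hb)

noncomputable def chi : ℕ → A.Dom → Concept
  | 0, d => atomsC sg hsg A d
  | m+1, d => .inter (atomsC sg hsg A d)
      (cconj ((rhoList sg hsg).map fun ρ => .inter
        (cconj ((succList A hA ρ d).map fun d' => .exRole ρ.1 ρ.2 (chi m d')))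
        (.neg (.exRole ρ.1 ρ.2 (.neg (cdisj ((succList A hA ρ d).map (chi m))))))))

lemma mem_interp_chi {B : Str} : ∀ (m : ℕ) (d : A.Dom) (e : B.Dom),
    e ∈ (chi sg hsg A hA m d).interp B ↔ NBisim sg B A m e d := by
  intro m
  induction m with
  | zero =>
    intro d e
    exact mem_interp_atomsC sg hsg A
  | succ m ih =>
    intro d e
    constructor
    · rintro ⟨hat, hconj⟩
      refine ⟨(mem_interp_atomsC sg hsg A).mp hat, ?_, ?_⟩
      · intro ρ hρ e' he'
        obtain ⟨h1, h2⟩ := (mem_interp_cconj _).mp hconj _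
          (List.mem_map_of_mem ((mem_rhoList sg hsg).mpr hρ))
        have h2' : ¬ ∃ w ∈ (Concept.neg
            (cdisj ((succList A hA ρ d).map (chi sg hsg A hA m)))).interp B,
            roleHolds B (ρ.1, ρ.2) e w := h2
        have hmem : e' ∈ (cdisj ((succList A hA ρ d).map (chi sg hsg A hA m))).interp B := by
          by_contra hne
          exact h2' ⟨e', hne, he'⟩
        obtain ⟨Cc, hCc, he2⟩ := (mem_interp_cdisj _).mp hmem
        obtain ⟨d', hd', rfl⟩ := List.mem_map.mp hCc
        exact ⟨d', (mem_succList A hA).mp hd', (ih d' e').mp he2⟩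
      · intro ρ hρ d' hd'
        obtain ⟨h1, h2⟩ := (mem_interp_cconj _).mp hconj _
          (List.mem_map_of_mem ((mem_rhoList sg hsg).mpr hρ))
        obtain ⟨e', he2, hrole⟩ := (mem_interp_cconj _).mp h1 _
          (List.mem_map_of_mem ((mem_succList A hA).mpr hd'))
        exact ⟨e', hrole, (ih d' e').mp he2⟩
    · rintro ⟨hat, hforth, hback⟩
      refine ⟨(mem_interp_atomsC sg hsg A).mpr hat, (mem_interp_cconj _).mpr ?_⟩
      intro Cc hCc
      obtain ⟨ρ, hρl, rfl⟩ := List.mem_map.mp hCc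
      have hρ := (mem_rhoList sg hsg).mp hρl
      constructor
      · apply (mem_interp_cconj _).mpr
        intro Cd hCd
        obtain ⟨d', hd', rfl⟩ := List.mem_map.mp hCd
        obtain ⟨e', hrole, hn⟩ := hback ρ hρ d' ((mem_succList A hA).mp hd')
        exact ⟨e', (ih d' e').mpr hn, hrole⟩
      · rintro ⟨w, hw, hrole⟩
        obtain ⟨d', hd', hn⟩ := hforth ρ hρ w hrole
        exact hw ((mem_interp_cdisj _).mpr ⟨chi sg hsg A hA m d',
          List.mem_map_of_mem ((mem_succList A hA).mpr hd'), (ih d' w).mpr hn⟩)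

lemma csig_atomsC (d : A.Dom) : (atomsC sg hsg A d).csig ⊆ sg := by
  apply csig_cconj
  intro C hC
  obtain ⟨c, hcl, rfl⟩ := List.mem_map.mp hC
  have hc := (mem_u1List sg hsg).mp hcl
  by_cases hd : A.rel 1 c ![d]
  · rw [if_pos hd]
    intro x hx
    rcases hx with rfl
    exact hc
  · rw [if_neg hd]
    intro x hx
    rcases hx with rfl
    exact hc

lemma csig_chi : ∀ (m : ℕ) (d : A.Dom), (chi sg hsg A hA m d).csig ⊆ sg := by
  intro m
  induction m with
  | zero => exact fun d => csig_atomsC sg hsg A d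
  | succ m ih =>
    intro d
    show (atomsC sg hsg A d).csig ∪ _ ⊆ sg
    apply Set.union_subset (csig_atomsC sg hsg A d)
    apply csig_cconj
    intro C hC
    obtain ⟨ρ, hρl, rfl⟩ := List.mem_map.mp hC
    have hρ := (mem_rhoList sg hsg).mp hρl
    apply Set.union_subset
    · apply csig_cconj
      intro C2 hC2
      obtain ⟨d', hd', rfl⟩ := List.mem_map.mp hC2
      show insert ((2 : ℕ), ρ.2) (chi sg hsg A hA m d').csig ⊆ sg
      exact Set.insert_subset hρ (ih d')
    · show insert ((2 : ℕ), ρ.2) (Concept.neg (cdisj _)).csig ⊆ sg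
      apply Set.insert_subset hρ
      apply csig_cdisj
      intro C2 hC2
      obtain ⟨d', hd', rfl⟩ := List.mem_map.mp hC2
      exact ih d'

end LevelBisim


/-! ### Ultraproducts of structures -/

section Ultra
open Classical Filter

variable (Bf : ℕ → Str)

def upSetoid : Setoid (∀ n, (Bf n).Dom) where
  r f g := ∀ᶠ n in ↑(hyperfilter ℕ), f n = g n
  iseqv := by
    refine ⟨fun f => Eventually.of_forall fun n => rfl, ?_, ?_⟩
    · intro f g h
      exact h.mono fun n hn => hn.symm
    · intro f g h h1 h2
      exact (h1.and h2).mono fun n hn => hn.1.trans hn.2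

def UProd := Quotient (upSetoid Bf)

noncomputable def upStr : Str where
  Dom := UProd Bf
  dom_nonempty := ⟨⟦fun n => ((Bf n).dom_nonempty).some⟧⟩
  rel k R t := ∀ᶠ n in ↑(hyperfilter ℕ), (Bf n).rel k R (fun i => (t i).out n)
  const c := ⟦fun n => (Bf n).const c⟧

variable {Bf}

lemma up_out_spec (x : ∀ n, (Bf n).Dom) :
    ∀ᶠ n in ↑(hyperfilter ℕ), (⟦x⟧ : UProd Bf).out n = x n :=
  Quotient.exact (Quotient.out_eq (⟦x⟧ : UProd Bf))

lemma uprel1 {c : ℕ} (u : UProd Bf) :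
    (upStr Bf).rel 1 c ![u] ↔ ∀ᶠ n in ↑(hyperfilter ℕ), (Bf n).rel 1 c ![u.out n] := by
  show (∀ᶠ n in ↑(hyperfilter ℕ), (Bf n).rel 1 c fun i => ((![u]) i).out n) ↔ _
  apply eventually_congr
  apply Eventually.of_forall
  intro n
  have : (fun i : Fin 1 => ((![u]) i).out n) = ![u.out n] := by
    funext i; fin_cases i <;> simp
  rw [this]

lemma uprel2 {R : ℕ} (u v : UProd Bf) :
    (upStr Bf).rel 2 R ![u, v] ↔
      ∀ᶠ n in ↑(hyperfilter ℕ), (Bf n).rel 2 R ![u.out n, v.out n] := by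
  show (∀ᶠ n in ↑(hyperfilter ℕ), (Bf n).rel 2 R fun i => ((![u, v]) i).out n) ↔ _
  apply eventually_congr
  apply Eventually.of_forall
  intro n
  have : (fun i : Fin 2 => ((![u, v]) i).out n) = ![u.out n, v.out n] := by
    funext i; fin_cases i <;> simp
  rw [this]

lemma uprole (ρ : Bool × ℕ) (u v : UProd Bf) :
    roleHolds (upStr Bf) ρ u v ↔
      ∀ᶠ n in ↑(hyperfilter ℕ), roleHolds (Bf n) ρ (u.out n) (v.out n) := by
  rcases ρ with ⟨i, R⟩
  cases i
  · show (upStr Bf).rel 2 R ![u, v] ↔ _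
    rw [uprel2]
    rfl
  · show (upStr Bf).rel 2 R ![v, u] ↔ _
    rw [uprel2]
    rfl

lemma up_interp : ∀ (C : Concept) (x : ∀ n, (Bf n).Dom),
    ((⟦x⟧ : UProd Bf) ∈ C.interp (upStr Bf) ↔
      ∀ᶠ n in ↑(hyperfilter ℕ), x n ∈ C.interp (Bf n)) := by
  intro C
  induction C with
  | top =>
    intro x
    simp only [Concept.interp, Set.mem_univ, true_iff]
    exact iff_of_true trivial (Eventually.of_forall fun n => trivial)
  | atom c =>
    intro x
    show (upStr Bf).rel 1 c ![⟦x⟧] ↔ ∀ᶠ n in ↑(hyperfilter ℕ), (Bf n).rel 1 c ![x n]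
    refine (uprel1 _).trans ?_
    constructor
    · intro h
      refine ((up_out_spec x).and h).mono fun n hn => ?_
      rw [← hn.1]
      exact hn.2
    · intro h
      refine ((up_out_spec x).and h).mono fun n hn => ?_
      rw [hn.1]
      exact hn.2
  | neg C ih =>
    intro x
    show ¬ (⟦x⟧ : UProd Bf) ∈ C.interp (upStr Bf) ↔ _
    refine (not_congr (ih x)).trans ?_; rw [← Ultrafilter.eventually_not]
    rfl
  | inter C D ihC ihD =>
    intro x
    show (_ ∈ C.interp (upStr Bf) ∧ _ ∈ D.interp (upStr Bf)) ↔ _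
    refine (and_congr (ihC x) (ihD x)).trans ?_; rw [← eventually_and]
    rfl
  | exRole i R C ih =>
    intro x
    refine mem_interp_exRole.trans ?_
    constructor
    · rintro ⟨e, he, hrole⟩
      obtain ⟨y, rfl⟩ := Quotient.exists_rep e
      replace he := (ih y).mp he
      replace hrole := (uprole _ _ _).mp hrole
      have := (he.and (hrole.and ((up_out_spec x).and (up_out_spec y))))
      refine this.mono fun n hn => ?_
      obtain ⟨h1, h2, h3, h4⟩ := hn
      rw [h3, h4] at h2
      exact ⟨y n, h1, h2⟩
    · intro h
      have hne : ∀ n, (Bf n).Dom := fun n => ((Bf n).dom_nonempty).some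
      set y : ∀ n, (Bf n).Dom := fun n =>
        if hx : x n ∈ (Concept.exRole i R C).interp (Bf n) then hx.choose else hne n with hy
      have hy' : ∀ᶠ n in ↑(hyperfilter ℕ),
          y n ∈ C.interp (Bf n) ∧ roleHolds (Bf n) (i, R) (x n) (y n) := by
        refine h.mono fun n hn => ?_
        have : y n = hn.choose := by rw [hy]; exact dif_pos hn
        rw [this]
        exact ⟨hn.choose_spec.1, hn.choose_spec.2⟩
      refine ⟨⟦y⟧, ?_, ?_⟩
      · refine (ih y).mpr ?_
        exact hy'.mono fun n hn => hn.1
      · show roleHolds (upStr Bf) (i, R) (⟦x⟧ : UProd Bf) ⟦y⟧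
        refine (uprole _ _ _).mpr ?_
        refine (hy'.and ((up_out_spec x).and (up_out_spec y))).mono fun n hn => ?_
        rw [hn.2.1, hn.2.2]
        exact hn.1.2

lemma up_isModel {K : ALCIKB} (hmod : ∀ n, (Bf n).IsModel K.toKB) :
    (upStr Bf).IsModel K.toKB := by
  rw [isModel_toKB_iff]
  constructor
  · intro pr hpr x hx
    obtain ⟨f, rfl⟩ := Quotient.exists_rep x
    have hx := (up_interp _ _).mp hx; refine (up_interp _ _).mpr ?_
    refine hx.mono fun n hn => ?_
    exact ((isModel_toKB_iff (Bf n) K).mp (hmod n)).1 pr hpr hn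
  · intro a ha
    show ∀ᶠ n in ↑(hyperfilter ℕ),
      (Bf n).rel a.arity a.rel (fun i => ((upStr Bf).const (a.args i)).out n)
    have hspec : ∀ᶠ n in ↑(hyperfilter ℕ),
        ∀ i : Fin a.arity, ((upStr Bf).const (a.args i)).out n = (Bf n).const (a.args i) := by
      rw [eventually_all]
      intro i
      exact up_out_spec _
    refine hspec.mono fun n hn => ?_
    have : (fun i => ((upStr Bf).const (a.args i)).out n)
        = fun i => (Bf n).const (a.args i) := funext hn
    rw [this]
    exact (hmod n).2 a ha

end Ultra


/-! ### The converse direction -/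

section Converse
open Classical Filter

lemma exists_freq {α : Type*} {s : Set α} (hs : s.Finite) (g : ℕ → α) (hg : ∀ n, g n ∈ s) :
    ∃ a ∈ s, ∀ m, ∃ n ≥ m, g n = a := by
  by_contra h
  push_neg at h
  choose! f hf using h
  set M := hs.toFinset.sup f with hM
  have hMle : f (g M) ≤ M := Finset.le_sup (hs.mem_toFinset.mpr (hg M))
  exact hf (g M) (hg M) M hMle rfl

lemma ultra_finset_exists {α : Type*} (s : Finset α) (p : α → ℕ → Prop)
    (h : ∀ᶠ n in ↑(hyperfilter ℕ), ∃ x ∈ s, p x n) :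
    ∃ x ∈ s, ∀ᶠ n in ↑(hyperfilter ℕ), p x n := by
  classical
  induction s using Finset.induction with
  | empty =>
    exfalso
    obtain ⟨n, hn⟩ := h.exists
    simp at hn
  | @insert a s' hx ih =>
    have h' : ∀ᶠ n in ↑(hyperfilter ℕ), p a n ∨ ∃ x ∈ s', p x n := by
      refine h.mono fun n hn => ?_
      obtain ⟨x, hxs, hp⟩ := hn
      rcases Finset.mem_insert.mp hxs with rfl | hxs'
      · exact Or.inl hp
      · exact Or.inr ⟨x, hxs', hp⟩
    rcases Ultrafilter.eventually_or.mp h' with h1 | h2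
    · exact ⟨a, Finset.mem_insert_self _ _, h1⟩
    · obtain ⟨x, hxs, hp⟩ := ih h2
      exact ⟨x, Finset.mem_insert_of_mem hxs, hp⟩

lemma hyper_eventually_ge (m : ℕ) : ∀ᶠ n in ↑(hyperfilter ℕ), m ≤ n := by
  have h := Filter.eventually_ge_atTop (α := ℕ) m
  rw [← Nat.cofinite_eq_atTop] at h
  exact h.filter_mono (hyperfilter_le_cofinite)

lemma statement11_converse (K : ALCIKB) (P : Set ℕ) (b : ℕ)
    (hPcons : ∀ a ∈ P, a ∈ K.db.consts)
    (h : ∃ A : Str, A.IsForestModel K ∧ A.FiniteOutdegree ∧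
      ∀ a ∈ P, ¬ ∃ B : Str, B.IsModel K.toKB ∧
        ALCIBisimilar K.sigK B (B.const a) A (A.const b)) :
    K.CSeparable P {b} := by
  classical
  obtain ⟨A, hAfor, hAfin, hsep⟩ := h
  have hAmod : A.IsModel K.toKB := hAfor.1
  have hsg : K.sigK.Finite := K.sigK_finite
  have hclaim : ∃ N, ∀ a ∈ P, ∀ B : Str, B.IsModel K.toKB →
      ¬ NBisim K.sigK B A N (B.const a) (A.const b) := by
    by_contra hcon
    push_neg at hcon
    choose g hgP Bs hBmod hBbis using hcon
    obtain ⟨a, haP, hfreq⟩ :=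
      exists_freq (K.db.consts_finite.subset fun x hx => hPcons x hx) g hgP
    have hfam : ∀ m : ℕ, ∃ B : Str, B.IsModel K.toKB ∧
        NBisim K.sigK B A m (B.const a) (A.const b) := by
      intro m
      obtain ⟨n, hn, hgn⟩ := hfreq m
      refine ⟨Bs n, hBmod n, ?_⟩
      have hbb := hBbis n
      rw [hgn] at hbb
      exact hbb.mono hn
    choose Bf hBfmod hBfbis using hfam
    apply hsep a haP
    refine ⟨upStr Bf, up_isModel hBfmod, ?_⟩
    refine ⟨{p | ∀ m, ∀ᶠ n in ↑(hyperfilter ℕ), NBisim K.sigK (Bf n) A m (p.1.out n) p.2},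
      ⟨?_, ?_, ?_⟩, ?_⟩
    · -- atoms
      rintro p hp c hc
      rw [uprel1 p.1]
      constructor
      · intro hrel
        obtain ⟨n, h1, h2⟩ := (hrel.and (hp 0)).exists
        exact (h2 c hc).mp h1
      · intro hrel
        exact (hp 0).mono fun n hn => (hn c hc).mpr hrel
    · -- forth
      rintro p hp ρ hρ e' hrole
      replace hrole := (uprole _ _ _).mp hrole
      have hFfin : ({d' | roleHolds A ρ p.2 d'}).Finite :=
        Set.Finite.subset (hAfin p.2) (fun x hx => roleHolds_roleEdge hx)
      have hstep : ∀ m : ℕ, ∃ d' ∈ hFfin.toFinset,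
          ∀ᶠ n in ↑(hyperfilter ℕ), NBisim K.sigK (Bf n) A m (e'.out n) d' := by
        intro m
        apply ultra_finset_exists
        refine ((hp (m+1)).and hrole).mono fun n hn => ?_
        obtain ⟨d', hrd, hnb⟩ := hn.1.2.1 ρ hρ (e'.out n) hn.2
        exact ⟨d', hFfin.mem_toFinset.mpr hrd, hnb⟩
      choose ds hdsF hdsB using hstep
      obtain ⟨d', hd'F, hfreq'⟩ := exists_freq (hFfin.toFinset.finite_toSet) ds
        (fun m => Finset.mem_coe.mpr (hdsF m))
      refine ⟨d', hFfin.mem_toFinset.mp (Finset.mem_coe.mp hd'F), ?_⟩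
      intro m
      obtain ⟨m', hm', hEq⟩ := hfreq' m
      have hB' := hdsB m'
      rw [hEq] at hB'
      exact hB'.mono fun n hn => hn.mono hm'
    · -- back
      rintro p hp ρ hρ d' hrole
      set y : ∀ n, (Bf n).Dom := fun n =>
        if h : (∃ w, roleHolds (Bf n) ρ (p.1.out n) w ∧ NBisim K.sigK (Bf n) A
            (Nat.findGreatest (fun k => ∃ w, roleHolds (Bf n) ρ (p.1.out n) w ∧
              NBisim K.sigK (Bf n) A k w d') n) w d')
        then h.choose else p.1.out n with hy
      have hkey : ∀ m, ∀ᶠ n in ↑(hyperfilter ℕ),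
          roleHolds (Bf n) ρ (p.1.out n) (y n) ∧ NBisim K.sigK (Bf n) A m (y n) d' := by
        intro m
        refine ((hp (m+1)).and (hyper_eventually_ge m)).mono fun n hn => ?_
        obtain ⟨w, hw1, hw2⟩ := hn.1.2.2 ρ hρ d' hrole
        have hPm : (fun k => ∃ w, roleHolds (Bf n) ρ (p.1.out n) w ∧
            NBisim K.sigK (Bf n) A k w d') m := ⟨w, hw1, hw2⟩
        have hspec := Nat.findGreatest_spec (P := fun k => ∃ w, roleHolds (Bf n) ρ (p.1.out n) w ∧
            NBisim K.sigK (Bf n) A k w d') hn.2 hPm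
        have hle : m ≤ Nat.findGreatest (fun k => ∃ w, roleHolds (Bf n) ρ (p.1.out n) w ∧
            NBisim K.sigK (Bf n) A k w d') n :=
          Nat.le_findGreatest (P := fun k => ∃ w, roleHolds (Bf n) ρ (p.1.out n) w ∧
            NBisim K.sigK (Bf n) A k w d') hn.2 hPm
        have hyn : y n = hspec.choose := by rw [hy]; exact dif_pos hspec
        rw [hyn]
        exact ⟨hspec.choose_spec.1, hspec.choose_spec.2.mono hle⟩
      refine ⟨⟦y⟧, ?_, ?_⟩
      · refine (uprole _ _ _).mpr ?_
        refine ((hkey 0).and (up_out_spec y)).mono fun n hn => ?_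
        rw [hn.2]
        exact hn.1.1
      · intro m
        refine ((hkey m).and (up_out_spec y)).mono fun n hn => ?_
        rw [hn.2]
        exact hn.1.2
    · -- membership
      intro m
      refine ((hyper_eventually_ge m).and
        (up_out_spec (fun n => (Bf n).const a))).mono fun n hn => ?_
      have : ((upStr Bf).const a).out n = (Bf n).const a := hn.2
      rw [this]
      exact (hBfbis n).mono hn.1
  obtain ⟨N, hN⟩ := hclaim
  refine ⟨.neg (chi K.sigK hsg A hAfin N (A.const b)), ?_, ?_, ?_⟩
  · exact csig_chi K.sigK hsg A hAfin N (A.const b)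
  · intro a ha B hB hmem
    exact hN a ha B hB ((mem_interp_chi K.sigK hsg A hAfin N (A.const b) (B.const a)).mp hmem)
  · rintro b' rfl
    intro hall
    have h1 := hall A hAmod
    exact h1 ((mem_interp_chi K.sigK hsg A hAfin N (A.const b') (A.const b')).mpr
      (NBisim.refl K.sigK A N (A.const b')))

end Converse

/-- ALCI-separability via forest models and bisimulations. -/
theorem statement_11 (K : ALCIKB) (P : Set ℕ) (b : ℕ) (hPne : P.Nonempty)
    (hPcons : ∀ a ∈ P, a ∈ K.db.consts) (hbcons : b ∈ K.db.consts) :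
    K.CSeparable P {b} ↔
      ∃ A : Str, A.IsForestModel K ∧ A.FiniteOutdegree ∧
        ∀ a ∈ P, ¬ ∃ B : Str, B.IsModel K.toKB ∧
          ALCIBisimilar K.sigK B (B.const a) A (A.const b) := by
  constructor
  · exact statement11_forward K P b hbcons
  · exact statement11_converse K P b hPcons

end Sep
end

section
/- Let (D,a⃗) be a pointed database, (A,b⃗) a pointed structure, Σ ⊇ sig(D) a signature, and ℓ ≥ |D|. If D_{con(a⃗)},a⃗ ≼^ℓ_{openGF,Σ} A,b⃗ and there is no homomorphism D_{con(a⃗)},a⃗ → A,b⃗, then there exist distinct elements d,d' of A at distance at most |D| from [b⃗] in the Gaifman graph of A such that A,d ∼^{ℓ−|D|}_{openGF,Σ} A,d'. -/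
namespace Sep

/-! ## Auxiliary lemmas for Statement 17 -/

section Stmt17Aux

variable {A B C : Str}

lemma withinDist_refl (A : Str) : ∀ (m : ℕ) (d : A.Dom), WithinDist A m d d
  | 0, _ => rfl
  | _ + 1, _ => Or.inl rfl

lemma withinDist_succ : ∀ {m : ℕ} {x y : A.Dom}, WithinDist A m x y → WithinDist A (m + 1) x y
  | 0, _, _, h => Or.inl h
  | _ + 1, _, _, Or.inl h => Or.inl h
  | _ + 1, _, _, Or.inr ⟨c, hc, h⟩ => Or.inr ⟨c, hc, withinDist_succ h⟩

lemma withinDist_mono {m m' : ℕ} {x y : A.Dom} (h : WithinDist A m x y) (hm : m ≤ m') :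
    WithinDist A m' x y := by
  induction hm with
  | refl => exact h
  | step _ ih => exact withinDist_succ ih

lemma withinDist_append : ∀ {m : ℕ} {x y z : A.Dom}, WithinDist A m x y →
    (y = z ∨ A.Adj y z) → WithinDist A (m + 1) x z
  | 0, x, y, z, h, hyz => by
      have hxy : x = y := h
      cases hyz with
      | inl h' => exact Or.inl (hxy.trans h')
      | inr h' => exact Or.inr ⟨z, hxy ▸ h', withinDist_refl A 0 z⟩
  | m + 1, x, y, z, h, hyz => by
      cases h with
      | inl h' =>
        cases hyz with
        | inl h'' => exact Or.inl (h'.trans h'')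
        | inr h'' => exact Or.inr ⟨z, h' ▸ h'', withinDist_refl A (m + 1) z⟩
      | inr h' =>
        obtain ⟨c, hc, h'⟩ := h'
        exact Or.inr ⟨c, hc, withinDist_append h' hyz⟩

lemma guardedTuple_subset {k k' : ℕ} {w : Fin k → A.Dom} {w' : Fin k' → A.Dom}
    (h : A.GuardedTuple w) (hs : Set.range w' ⊆ Set.range w) : A.GuardedTuple w' :=
  let ⟨G, hG, hsub⟩ := h; ⟨G, hG, hs.trans hsub⟩

lemma guardedTuple_adj {k : ℕ} {w : Fin k → A.Dom} (h : A.GuardedTuple w) (i j : Fin k) :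
    w i = w j ∨ A.Adj (w i) (w j) := by
  obtain ⟨G, hG, hsub⟩ := h
  rcases hG with ⟨d, rfl⟩ | ⟨k', R, tt, hrel, rfl⟩
  · left
    have h1 : w i = d := hsub ⟨i, rfl⟩
    have h2 : w j = d := hsub ⟨j, rfl⟩
    rw [h1, h2]
  · right
    exact ⟨k', R, tt, hrel, hsub ⟨i, rfl⟩, hsub ⟨j, rfl⟩⟩

lemma seq_shrink {conn : Bool} {sg : Set (ℕ × ℕ)} {Is : ℕ → Set (GPair A B)} {ℓ ℓ' : ℕ}
    (h : IsGBisimSeq conn sg A B Is ℓ) (hle : ℓ' ≤ ℓ) : IsGBisimSeq conn sg A B Is ℓ' :=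
  ⟨fun i hi => h.1 i (lt_of_lt_of_le hi hle), fun i hi => h.2.1 i (le_trans hi hle),
   fun i hi => h.2.2 i (lt_of_lt_of_le hi hle)⟩

lemma glb_partialIso {conn : Bool} {sg : Set (ℕ × ℕ)} {n : ℕ} {a : Fin n → A.Dom}
    {b : Fin n → B.Dom} {ℓ : ℕ} (h : GLBisimilar conn sg A a B b ℓ) : PartialIso sg A B a b := by
  obtain ⟨Is, hseq, hmem⟩ := h
  exact hseq.2.1 ℓ le_rfl _ hmem

lemma glb_mono {conn : Bool} {sg : Set (ℕ × ℕ)} {n : ℕ} {a : Fin n → A.Dom}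
    {b : Fin n → B.Dom} {ℓ ℓ' : ℕ}
    (h : GLBisimilar conn sg A a B b ℓ) (hle : ℓ' ≤ ℓ) : GLBisimilar conn sg A a B b ℓ' := by
  obtain ⟨Is, hseq, hmem⟩ := h
  refine ⟨fun i => Is (i + (ℓ - ℓ')), ⟨?_, ?_, ?_⟩, ?_⟩
  · intro i hi; exact hseq.1 _ (by omega)
  · intro i hi; exact hseq.2.1 _ (by omega)
  · intro i hi
    have e : (i + 1) + (ℓ - ℓ') = (i + (ℓ - ℓ')) + 1 := by omega
    intro p hp
    have hp' : p ∈ Is (i + (ℓ - ℓ') + 1) := by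
      have h0 : p ∈ Is (i + 1 + (ℓ - ℓ')) := hp
      rwa [e] at h0
    exact hseq.2.2 _ (by omega) p hp'
  · have e : ℓ' + (ℓ - ℓ') = ℓ := by omega
    show GPair.mk n a b ∈ Is (ℓ' + (ℓ - ℓ'))
    rw [e]; exact hmem

lemma glb_refl (conn : Bool) (sg : Set (ℕ × ℕ)) {n : ℕ} (a : Fin n → A.Dom) (ℓ : ℕ) :
    GLBisimilar conn sg A a A a ℓ := by
  refine ⟨fun i => {p | p.a = p.b ∧ (A.GuardedTuple p.a ∨ ℓ ≤ i)}, ⟨?_, ?_, ?_⟩, rfl, Or.inr le_rfl⟩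
  · rintro i hi ⟨k, pa, pb⟩ ⟨heq, hg⟩
    dsimp at heq; subst heq
    have hg' : A.GuardedTuple pa := hg.resolve_right (by omega)
    exact ⟨hg', hg'⟩
  · rintro i _ ⟨k, pa, pb⟩ ⟨heq, _⟩
    dsimp at heq; subst heq
    exact ⟨fun _ _ => Iff.rfl, fun _ _ _ _ => Iff.rfl⟩
  · rintro i hi ⟨k, pa, pb⟩ ⟨heq, _⟩
    dsimp at heq; subst heq
    constructor
    · intro k' a' hg _
      exact ⟨a', ⟨rfl, Or.inl hg⟩, fun _ _ h => h⟩
    · intro k' b' hg _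
      exact ⟨b', ⟨rfl, Or.inl hg⟩, fun _ _ h => h⟩

lemma partialIso_symm {sg : Set (ℕ × ℕ)} {k : ℕ} {a : Fin k → A.Dom} {b : Fin k → B.Dom}
    (h : PartialIso sg A B a b) : PartialIso sg B A b a :=
  ⟨fun i j => (h.1 i j).symm, fun m R hR f => (h.2 m R hR f).symm⟩

lemma glb_symm {conn : Bool} {sg : Set (ℕ × ℕ)} {n : ℕ} {a : Fin n → A.Dom}
    {b : Fin n → B.Dom} {ℓ : ℕ}
    (h : GLBisimilar conn sg A a B b ℓ) : GLBisimilar conn sg B b A a ℓ := by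
  obtain ⟨Is, ⟨h1, h2, h3⟩, hmem⟩ := h
  refine ⟨fun i => {q | GPair.mk q.k q.b q.a ∈ Is i}, ⟨?_, ?_, ?_⟩, hmem⟩
  · intro i hi q hq
    exact ⟨(h1 i hi _ hq).2, (h1 i hi _ hq).1⟩
  · intro i hi q hq
    exact partialIso_symm (h2 i hi _ hq)
  · intro i hi q hq
    have hst := h3 i hi _ hq
    constructor
    · intro k' a' hg hconn
      obtain ⟨b', hb'mem, hag⟩ := hst.2 k' a' hg hconn
      exact ⟨b', hb'mem, hag⟩
    · intro k' b' hg hconn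
      obtain ⟨a', ha'mem, hag⟩ := hst.1 k' b' hg hconn
      exact ⟨a', ha'mem, hag⟩

lemma glb_sub {conn : Bool} {sg : Set (ℕ × ℕ)} {n m : ℕ} {a : Fin n → A.Dom}
    {b : Fin n → B.Dom} {ℓ : ℕ}
    (h : GLBisimilar conn sg A a B b ℓ) (j : Fin m → Fin n) :
    GLBisimilar conn sg A (a ∘ j) B (b ∘ j) ℓ := by
  obtain ⟨Is, ⟨h1, h2, h3⟩, hmem⟩ := h
  refine ⟨fun i => {q | ∃ p ∈ Is i, ∃ jj : Fin q.k → Fin p.k, q.a = p.a ∘ jj ∧ q.b = p.b ∘ jj},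
    ⟨?_, ?_, ?_⟩, ⟨⟨n, a, b⟩, hmem, j, rfl, rfl⟩⟩
  · intro i hi q hq
    obtain ⟨k, qa, qb⟩ := q
    simp only [Set.mem_setOf_eq] at hq
    obtain ⟨p, hp, jj, hqa, hqb⟩ := hq
    subst hqa; subst hqb
    obtain ⟨hga, hgb⟩ := h1 i hi p hp
    exact ⟨guardedTuple_subset hga (Set.range_comp_subset_range jj p.a),
           guardedTuple_subset hgb (Set.range_comp_subset_range jj p.b)⟩
  · intro i hi q hq
    obtain ⟨k, qa, qb⟩ := q
    simp only [Set.mem_setOf_eq] at hq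
    obtain ⟨p, hp, jj, hqa, hqb⟩ := hq
    subst hqa; subst hqb
    obtain ⟨hiso1, hiso2⟩ := h2 i hi p hp
    refine ⟨fun i' j' => hiso1 (jj i') (jj j'), ?_⟩
    intro m' R hR f
    exact hiso2 m' R hR (jj ∘ f)
  · intro i hi q hq
    obtain ⟨k, qa, qb⟩ := q
    simp only [Set.mem_setOf_eq] at hq
    obtain ⟨p, hp, jj, hqa, hqb⟩ := hq
    subst hqa; subst hqb
    obtain ⟨hf, hb⟩ := h3 i hi p hp
    constructor
    · intro k' a' hg hconn
      obtain ⟨b', hb'mem, hag⟩ := hf k' a' hg (fun hc => by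
        obtain ⟨x, hx1, hx2⟩ := hconn hc
        obtain ⟨i', hi'⟩ := hx2
        exact ⟨x, hx1, ⟨jj i', hi'⟩⟩)
      refine ⟨b', ⟨⟨k', a', b'⟩, hb'mem, id, rfl, rfl⟩, ?_⟩
      intro i' j' h'
      exact hag (jj i') j' h'
    · intro k' b' hg hconn
      obtain ⟨a', ha'mem, hag⟩ := hb k' b' hg (fun hc => by
        obtain ⟨x, hx1, hx2⟩ := hconn hc
        obtain ⟨i', hi'⟩ := hx2
        exact ⟨x, hx1, ⟨jj i', hi'⟩⟩)
      refine ⟨a', ⟨⟨k', a', b'⟩, ha'mem, id, rfl, rfl⟩, ?_⟩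
      intro i' j' h'
      exact hag (jj i') j' h'

lemma glb_trans {conn : Bool} {sg : Set (ℕ × ℕ)} {n : ℕ} {a : Fin n → A.Dom}
    {b : Fin n → B.Dom} {c : Fin n → C.Dom} {ℓ : ℕ}
    (hab : GLBisimilar conn sg A a B b ℓ) (hbc : GLBisimilar conn sg B b C c ℓ) :
    GLBisimilar conn sg A a C c ℓ := by
  obtain ⟨I1, ⟨h11, h12, h13⟩, hm1⟩ := hab
  obtain ⟨I2, ⟨h21, h22, h23⟩, hm2⟩ := hbc
  refine ⟨fun i => {q : GPair A C | ∃ mb : Fin q.k → B.Dom,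
      GPair.mk q.k q.a mb ∈ I1 i ∧ GPair.mk q.k mb q.b ∈ I2 i},
    ⟨?_, ?_, ?_⟩, ⟨b, hm1, hm2⟩⟩
  · rintro i hi q ⟨mb, hq1, hq2⟩
    exact ⟨(h11 i hi _ hq1).1, (h21 i hi _ hq2).2⟩
  · rintro i hi q ⟨mb, hq1, hq2⟩
    obtain ⟨p1a, p1b⟩ := h12 i hi _ hq1
    obtain ⟨p2a, p2b⟩ := h22 i hi _ hq2
    exact ⟨fun i' j' => (p1a i' j').trans (p2a i' j'),
           fun m' R hR f => (p1b m' R hR f).trans (p2b m' R hR f)⟩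
  · rintro i hi q ⟨mb, hq1, hq2⟩
    constructor
    · intro k' a' hg hconn
      obtain ⟨mb', hmbmem, hag1⟩ := (h13 i hi _ hq1).1 k' a' hg hconn
      have hgmb' : B.GuardedTuple mb' := (h11 i hi _ hmbmem).2
      obtain ⟨c', hcmem, hag2⟩ := (h23 i hi _ hq2).1 k' mb' hgmb' (fun hc => by
        obtain ⟨x, ⟨j', hj'⟩, ⟨i', hi'⟩⟩ := hconn hc
        exact ⟨mb' j', ⟨j', rfl⟩, ⟨i', hag1 i' j' (hi'.trans hj'.symm)⟩⟩)
      exact ⟨c', ⟨mb', hmbmem, hcmem⟩, fun i' j' h' => hag2 i' j' (hag1 i' j' h')⟩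
    · intro k' c' hg hconn
      obtain ⟨mb', hmbmem, hag2⟩ := (h23 i hi _ hq2).2 k' c' hg hconn
      have hgmb' : B.GuardedTuple mb' := (h21 i hi _ hmbmem).1
      obtain ⟨a', hamem, hag1⟩ := (h13 i hi _ hq1).2 k' mb' hgmb' (fun hc => by
        obtain ⟨x, ⟨j', hj'⟩, ⟨i', hi'⟩⟩ := hconn hc
        exact ⟨mb' j', ⟨j', rfl⟩, ⟨i', hag2 i' j' (hi'.trans hj'.symm)⟩⟩)
      exact ⟨a', ⟨mb', hamem, hmbmem⟩, fun i' j' h' => hag1 i' j' (hag2 i' j' h')⟩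

/-- Candidate assignments for guarded sets of the intermediate database, built by
walking along overlapping guarded sets using the step conditions of bisimulations. -/
inductive Cand (sg : Set (ℕ × ℕ)) (A : Str) (H : Set (EPair A)) (ℓ : ℕ)
    {n : ℕ} (t0 : Fin n → ℕ) (b : Fin n → A.Dom) :
    (p : EPair A) → (Fin p.k → A.Dom) → ℕ → Prop where
  | base : Cand sg A H ℓ t0 b ⟨n, t0, b⟩ b 0
  | step {p : EPair A} {w : Fin p.k → A.Dom} {r : ℕ} {p' : EPair A} {w' : Fin p'.k → A.Dom} :
      Cand sg A H ℓ t0 b p w r → p' ∈ H →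
      (∃ (i : Fin p.k) (s : Fin p'.k), p.c i = p'.c s ∧ w i = w' s) →
      A.GuardedTuple w' →
      GLBisimilar true sg A w' A p'.f (ℓ - (r + 1)) →
      Cand sg A H ℓ t0 b p' w' (r + 1)

section Stmt17Cand

variable {sg : Set (ℕ × ℕ)} {A : Str} {H : Set (EPair A)} {ℓ n : ℕ}
  {t0 : Fin n → ℕ} {b : Fin n → A.Dom}

lemma cand_mem (hp0 : EPair.mk n t0 b ∈ H) {p : EPair A} {w : Fin p.k → A.Dom} {r : ℕ}
    (hc : Cand sg A H ℓ t0 b p w r) : p ∈ H := by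
  cases hc with
  | base => exact hp0
  | step _ hH _ _ _ => exact hH

lemma cand_bisim {p : EPair A} {w : Fin p.k → A.Dom} {r : ℕ}
    (hc : Cand sg A H ℓ t0 b p w r) : GLBisimilar true sg A w A p.f (ℓ - r) := by
  cases hc with
  | base => exact glb_refl true sg b ℓ
  | step _ _ _ _ hbis => exact hbis

lemma cand_near {p : EPair A} {w : Fin p.k → A.Dom} {r : ℕ}
    (hc : Cand sg A H ℓ t0 b p w r) : ∀ i, ∃ i₀ : Fin n, WithinDist A r (b i₀) (w i) := by
  induction hc with
  | base => exact fun i => ⟨i, withinDist_refl A 0 (b i)⟩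
  | step hcand hH hshared hg hbis ih =>
    intro i
    obtain ⟨i₁, s, hcc, hww⟩ := hshared
    obtain ⟨i₀, hw⟩ := ih i₁
    have hadj := guardedTuple_adj hg s i
    rw [← hww] at hadj
    exact ⟨i₀, withinDist_append hw hadj⟩

end Stmt17Cand

section Stmt17Main

/-- The compatibility condition on pairs of partial embeddings (last clause of `GLEmbed`). -/
def PairCond (sg : Set (ℕ × ℕ)) (A : Str) (H : Set (EPair A)) (ℓ : ℕ) : Prop :=
  ∀ p₁ ∈ H, ∀ p₂ ∈ H,
    ∃ (m : ℕ) (j₁ : Fin m → Fin p₁.k) (j₂ : Fin m → Fin p₂.k),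
      p₁.c ∘ j₁ = p₂.c ∘ j₂ ∧
      Set.range (p₁.c ∘ j₁) = Set.range p₁.c ∩ Set.range p₂.c ∧
      PartialIso sg A A (p₁.f ∘ j₁) (p₂.f ∘ j₂) ∧
      ∀ (k' : ℕ) (g : Fin k' → Fin m),
        Set.range (p₁.f ∘ j₁ ∘ g) = Set.range (p₁.f ∘ j₁) →
        GLBisimilar true sg A (p₁.f ∘ j₁ ∘ g) A (p₂.f ∘ j₂ ∘ g) ℓ

variable {A : Str} {sg : Set (ℕ × ℕ)} {H : Set (EPair A)} {D' : Database} {ℓ n : ℕ}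
  {t0 : Fin n → ℕ} {b : Fin n → A.Dom}

lemma pairf_bisim (hpemb : ∀ p ∈ H, IsPartialEmbed D' A p) (hpair : PairCond sg A H ℓ)
    {p₁ p₂ : EPair A} (h₁ : p₁ ∈ H) (h₂ : p₂ ∈ H) {i₁ : Fin p₁.k} {i₂ : Fin p₂.k}
    (hc : p₁.c i₁ = p₂.c i₂) :
    GLBisimilar true sg A (fun _ : Fin 1 => p₁.f i₁) A (fun _ : Fin 1 => p₂.f i₂) ℓ := by
  obtain ⟨m, j₁, j₂, hcc, hrange, hiso, hbis⟩ := hpair p₁ h₁ p₂ h₂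
  have hx : p₁.c i₁ ∈ Set.range (p₁.c ∘ j₁) := by
    rw [hrange]; exact ⟨⟨i₁, rfl⟩, ⟨i₂, hc.symm⟩⟩
  obtain ⟨s, hs⟩ := hx
  have hfull := hbis m id (by rw [Function.comp_id])
  simp only [Function.comp_id] at hfull
  have hsub := glb_sub hfull (fun _ : Fin 1 => s)
  have e₁ : p₁.f (j₁ s) = p₁.f i₁ := ((hpemb p₁ h₁).1 (j₁ s) i₁).mp hs
  have e₂ : p₂.f (j₂ s) = p₂.f i₂ := by
    refine ((hpemb p₂ h₂).1 (j₂ s) i₂).mp ?_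
    have h3 : p₁.c (j₁ s) = p₂.c (j₂ s) := congrFun hcc s
    have hs' : p₁.c (j₁ s) = p₁.c i₁ := hs
    rw [← h3, hs', hc]
  have h1' : ((p₁.f ∘ j₁) ∘ fun _ : Fin 1 => s) = (fun _ : Fin 1 => p₁.f i₁) :=
    funext fun _ => e₁
  have h2' : ((p₂.f ∘ j₂) ∘ fun _ : Fin 1 => s) = (fun _ : Fin 1 => p₂.f i₂) :=
    funext fun _ => e₂
  rw [h1', h2'] at hsub
  exact hsub

lemma cand_extend (hsig : D'.sig ⊆ sg)
    (hpemb : ∀ p ∈ H, IsPartialEmbed D' A p)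
    (hcover : ∀ G : Set ℕ, D'.GuardedSet G → ∃ p ∈ H, Set.range p.c = G)
    (hpair : PairCond sg A H ℓ)
    {p : EPair A} {w : Fin p.k → A.Dom} {r : ℕ}
    (hc : Cand sg A H ℓ t0 b p w r) (hpH : p ∈ H) (hr : r < ℓ)
    {a' : Atom} (ha' : a' ∈ D'.atoms)
    (hover : (Set.range a'.args ∩ Set.range p.c).Nonempty) :
    ∃ p' ∈ H, Set.range p'.c = Set.range a'.args ∧
      ∃ w' : Fin p'.k → A.Dom, Cand sg A H ℓ t0 b p' w' (r + 1) := by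
  obtain ⟨P', hP'H, hPr⟩ := hcover (Set.range a'.args) (Or.inr ⟨a', ha', rfl⟩)
  have hg0 : ∀ s : Fin a'.arity, ∃ idx : Fin P'.k, P'.c idx = a'.args s := by
    intro s
    have : a'.args s ∈ Set.range P'.c := by rw [hPr]; exact ⟨s, rfl⟩
    exact this
  choose g hg using hg0
  have hargs : a'.args = P'.c ∘ g := funext fun s => (hg s).symm
  have hrel : A.rel a'.arity a'.rel (P'.f ∘ g) := (hpemb P' hP'H).2.2 a' ha' g hargs
  have hgf : A.GuardedTuple P'.f := by
    refine ⟨Set.range (P'.f ∘ g), Or.inr ⟨a'.arity, a'.rel, P'.f ∘ g, hrel, rfl⟩, ?_⟩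
    rintro y ⟨idx, rfl⟩
    have hmem : P'.c idx ∈ Set.range a'.args := by rw [← hPr]; exact ⟨idx, rfl⟩
    obtain ⟨s, hs⟩ := hmem
    have : P'.f idx = P'.f (g s) := ((hpemb P' hP'H).1 idx (g s)).mp (by rw [hg s, hs])
    exact ⟨s, this.symm⟩
  obtain ⟨m, j₁, j₂, hcc, hrange, hiso, hbisP⟩ := hpair p hpH P' hP'H
  have hovr : (Set.range (p.c ∘ j₁)).Nonempty := by
    rw [hrange]
    obtain ⟨x, hx1, hx2⟩ := hover
    exact ⟨x, hx2, by rw [hPr]; exact hx1⟩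
  obtain ⟨x, istar, histar⟩ := hovr
  have hfull := hbisP m id (by rw [Function.comp_id])
  simp only [Function.comp_id] at hfull
  have hwb : GLBisimilar true sg A (w ∘ j₁) A (P'.f ∘ j₂) (ℓ - r) :=
    glb_trans (glb_sub (cand_bisim hc) j₁) (glb_mono hfull (by omega))
  obtain ⟨Is, hseq, hmem⟩ := hwb
  have heq : ℓ - r = (ℓ - r - 1) + 1 := by omega
  have hmem' : GPair.mk m (w ∘ j₁) (P'.f ∘ j₂) ∈ Is ((ℓ - r - 1) + 1) := by
    rw [← heq]; exact hmem
  have hstep := (hseq.2.2 (ℓ - r - 1) (by omega) _ hmem').2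
  obtain ⟨w', hw'mem, hag⟩ := hstep P'.k P'.f hgf (fun _ =>
    ⟨P'.f (j₂ istar), ⟨j₂ istar, rfl⟩, ⟨istar, rfl⟩⟩)
  refine ⟨P', hP'H, hPr, w', ?_⟩
  have hbw : GLBisimilar true sg A w' A P'.f (ℓ - (r + 1)) := by
    have heq2 : ℓ - (r + 1) = ℓ - r - 1 := by omega
    rw [heq2]
    exact ⟨Is, seq_shrink hseq (by omega), hw'mem⟩
  have hgw : A.GuardedTuple w' := (hseq.1 (ℓ - r - 1) (by omega) _ hw'mem).1
  exact Cand.step hc hP'H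
    ⟨j₁ istar, j₂ istar, congrFun hcc istar, hag istar (j₂ istar) rfl⟩ hgw hbw

/-- Reachability within `k` steps from a set `E` in the Gaifman graph of a database. -/
def ReachN (D' : Database) (E : Set ℕ) : ℕ → ℕ → Prop
  | 0, c => c ∈ E
  | k + 1, c => ReachN D' E k c ∨ ∃ c', ReachN D' E k c' ∧ D'.adj c' c

lemma reachN_mono {D'' : Database} {E : Set ℕ} {k k' c} (hk : k ≤ k')
    (h : ReachN D'' E k c) : ReachN D'' E k' c := by
  induction hk with
  | refl => exact h
  | step _ ih => exact Or.inl ih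

lemma reachN_of_rtg {D'' : Database} {E : Set ℕ} {x c : ℕ} (hx : x ∈ E)
    (h : Relation.ReflTransGen D''.adj x c) : ∃ k, ReachN D'' E k c := by
  induction h with
  | refl => exact ⟨0, hx⟩
  | tail h1 h2 ih =>
    obtain ⟨k, hk⟩ := ih
    exact ⟨k + 1, Or.inr ⟨_, hk, h2⟩⟩

lemma reachN_subset_consts {D'' : Database} {E : Set ℕ} (hE : E ⊆ D''.consts) :
    ∀ k c, ReachN D'' E k c → c ∈ D''.consts := by
  intro k
  induction k with
  | zero => intro c h; exact hE h
  | succ k ih =>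
    intro c h
    cases h with
    | inl h => exact ih c h
    | inr h =>
      obtain ⟨c', _, a, ha, _, hc⟩ := h
      exact Set.mem_biUnion ha hc

lemma reachN_bound {D'' : Database} {E : Set ℕ} (hE : E ⊆ D''.consts) (hEne : E.Nonempty) :
    ∃ k₀, k₀ < D''.consts.ncard ∧ ∀ c, (∃ k, ReachN D'' E k c) → ReachN D'' E k₀ c := by
  set M := D''.consts.ncard with hM
  have hfin : ∀ k, {c | ReachN D'' E k c}.Finite := fun k =>
    D''.consts_finite.subset (fun c hc => reachN_subset_consts hE k c hc)
  have hmono : ∀ k, {c | ReachN D'' E k c} ⊆ {c | ReachN D'' E (k + 1) c} :=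
    fun k c hc => Or.inl hc
  -- there is a stabilization point below M
  have hstab : ∃ j, j < M ∧ {c | ReachN D'' E j c} = {c | ReachN D'' E (j + 1) c} := by
    by_contra hcon
    push_neg at hcon
    have hgrow : ∀ j, j ≤ M → j + 1 ≤ ({c | ReachN D'' E j c}).ncard := by
      intro j
      induction j with
      | zero =>
        intro _
        have hne : {c | ReachN D'' E 0 c}.Nonempty := hEne
        exact (Set.ncard_pos (hfin 0)).mpr hne
      | succ j ih =>
        intro hj
        have hlt : {c | ReachN D'' E j c} ⊂ {c | ReachN D'' E (j + 1) c} :=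
          ⟨hmono j, fun hsup => (hcon j (by omega))
            (Set.Subset.antisymm (hmono j) hsup)⟩
        have := Set.ncard_lt_ncard hlt (hfin (j + 1))
        have := ih (by omega)
        omega
    have h1 : M + 1 ≤ ({c | ReachN D'' E M c}).ncard := hgrow M le_rfl
    have h2 : ({c | ReachN D'' E M c}).ncard ≤ M :=
      Set.ncard_le_ncard (fun c hc => reachN_subset_consts hE M c hc) D''.consts_finite
    omega
  obtain ⟨j₀, hj₀, hfix⟩ := hstab
  have hstay : ∀ j c, ReachN D'' E (j₀ + j) c → ReachN D'' E j₀ c := by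
    intro j
    induction j with
    | zero => exact fun c h => h
    | succ j ih =>
      intro c h
      cases h with
      | inl h => exact ih c h
      | inr h =>
        obtain ⟨c', hc', hadj⟩ := h
        have : ReachN D'' E (j₀ + 1) c := Or.inr ⟨c', ih c' hc', hadj⟩
        have hmem : c ∈ {c | ReachN D'' E (j₀ + 1) c} := this
        rw [← hfix] at hmem
        exact hmem
  refine ⟨j₀, hj₀, ?_⟩
  rintro c ⟨k, hk⟩
  rcases le_or_gt k j₀ with h | h
  · exact reachN_mono h hk
  · have : ReachN D'' E (j₀ + (k - j₀)) c := by
      have e : j₀ + (k - j₀) = k := by omega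
      rw [e]; exact hk
    exact hstay _ c this

variable {A : Str} {sg : Set (ℕ × ℕ)} {H : Set (EPair A)} {D' : Database} {ℓ n : ℕ}
  {t0 : Fin n → ℕ} {b : Fin n → A.Dom}

lemma cand_cover (hsig : D'.sig ⊆ sg)
    (hpemb : ∀ p ∈ H, IsPartialEmbed D' A p)
    (hcover : ∀ G : Set ℕ, D'.GuardedSet G → ∃ p ∈ H, Set.range p.c = G)
    (hpair : PairCond sg A H ℓ)
    (hp0 : EPair.mk n t0 b ∈ H) :
    ∀ k, k < ℓ → ∀ c, ReachN D' (Set.range t0) k c → ∀ a' ∈ D'.atoms,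
      c ∈ Set.range a'.args →
      ∃ p' ∈ H, Set.range p'.c = Set.range a'.args ∧
        ∃ (w' : Fin p'.k → A.Dom) (r : ℕ), r ≤ k + 1 ∧ Cand sg A H ℓ t0 b p' w' r := by
  intro k
  induction k with
  | zero =>
    intro hk c hre a' ha' hca
    obtain ⟨i, hi⟩ := hre
    have hbase : Cand sg A H ℓ t0 b ⟨n, t0, b⟩ b 0 := Cand.base
    have hov : (Set.range a'.args ∩ Set.range (EPair.mk n t0 b).c).Nonempty :=
      ⟨c, hca, ⟨i, hi⟩⟩
    obtain ⟨p', hp'H, hpr, w', hcand⟩ :=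
      cand_extend hsig hpemb hcover hpair hbase hp0 hk ha' hov
    exact ⟨p', hp'H, hpr, w', 1, le_rfl, hcand⟩
  | succ k ih =>
    intro hk c hre a' ha' hca
    cases hre with
    | inl h =>
      obtain ⟨p', hp'H, hpr, w', r, hrle, hcand⟩ := ih (by omega) c h a' ha' hca
      exact ⟨p', hp'H, hpr, w', r, by omega, hcand⟩
    | inr h =>
      obtain ⟨c', hc', aa, haa, hc'mem, hcmem⟩ := h
      obtain ⟨p₁, hp₁H, hpr₁, w₁, r₁, hr₁le, hcand₁⟩ := ih (by omega) c' hc' aa haa hc'mem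
      have hov : (Set.range a'.args ∩ Set.range p₁.c).Nonempty :=
        ⟨c, hca, by rw [hpr₁]; exact hcmem⟩
      obtain ⟨p', hp'H, hpr, w', hcand⟩ :=
        cand_extend hsig hpemb hcover hpair hcand₁ hp₁H (by omega) ha' hov
      exact ⟨p', hp'H, hpr, w', r₁ + 1, by omega, hcand⟩

end Stmt17Main

end Stmt17Aux

section Stmt17Conn

lemma rtg_restrict (D : Database) {n : ℕ} (t : Fin n → ℕ) {c₀ d : ℕ}
    (hc₀ : c₀ ∈ Set.range t) (h : Relation.ReflTransGen D.adj c₀ d) :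
    Relation.ReflTransGen (D.conRestrict t).adj c₀ d := by
  induction h with
  | refl => exact Relation.ReflTransGen.refl
  | @tail b' c' hpre hstep ih =>
    obtain ⟨a, ha, hb, hc⟩ := hstep
    have haD0 : a ∈ (D.conRestrict t).atoms := ⟨ha, c₀, hc₀, b', hb, hpre⟩
    exact ih.tail ⟨a, haD0, hb, hc⟩

lemma rtg_map {D₀ D' : Database} {e : ℕ → ℕ}
    (honto1 : ∀ a ∈ D₀.atoms, a.mapC e ∈ D'.atoms) {x y : ℕ}
    (h : Relation.ReflTransGen D₀.adj x y) :
    Relation.ReflTransGen D'.adj (e x) (e y) := by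
  induction h with
  | refl => exact Relation.ReflTransGen.refl
  | @tail b' c' hpre hstep ih =>
    obtain ⟨a, ha, ⟨i, hi⟩, ⟨j, hj⟩⟩ := hstep
    exact ih.tail ⟨a.mapC e, honto1 a ha, ⟨i, congrArg e hi⟩, ⟨j, congrArg e hj⟩⟩

end Stmt17Conn

/-- a guarded ℓ-embedding without a homomorphism forces two
distinct connected-guarded-(ℓ−|D|)-bisimilar elements near the parameters. -/
theorem statement_17 {n : ℕ} (D : Database) (t : Fin n → ℕ)
    (ht : ∀ i : Fin n, t i ∈ D.consts)
    (A : Str) (b : Fin n → A.Dom) (sg : Set (ℕ × ℕ)) (hsg : D.sig ⊆ sg)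
    (ℓ : ℕ) (hℓ : D.csize ≤ ℓ)
    (hemb : GLEmbed sg (D.conRestrict t) t A b ℓ)
    (hhom : ¬ PointedHom (D.conRestrict t) t A b) :
    ∃ d d' : A.Dom, d ≠ d' ∧
      (∃ i : Fin n, WithinDist A D.csize (b i) d) ∧
      (∃ i : Fin n, WithinDist A D.csize (b i) d') ∧
      GLBisimilar true sg A (fun _ : Fin 1 => d) A (fun _ : Fin 1 => d') (ℓ - D.csize) := by
  classical
  -- the case n = 0 is impossible
  rcases Nat.eq_zero_or_pos n with hn | npos
  · exfalso
    apply hhom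
    subst hn
    refine ⟨fun _ => Classical.choice A.dom_nonempty, ?_, fun i => i.elim0⟩
    rintro a ⟨-, c, hc, -⟩
    obtain ⟨i, -⟩ := hc
    exact i.elim0
  have hc1 : 1 ≤ D.csize := by
    have hne : D.consts.Nonempty := ⟨t ⟨0, npos⟩, ht _⟩
    exact (Set.ncard_pos D.consts_finite).mpr hne
  obtain ⟨D', e, H, ⟨honto1, honto2⟩, hpemb, hp0, hcover, hpair0⟩ := hemb
  have hpair : PairCond sg A H ℓ := hpair0
  -- the signature of D' is contained in sg
  have hsigD' : D'.sig ⊆ sg := by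
    rintro pr ⟨a', ha', heq⟩
    obtain ⟨a, haD0, hma⟩ := honto2 a' ha'
    apply hsg
    exact ⟨a, haD0.1, by rw [← heq, ← hma]; rfl⟩
  -- base constants are constants of D'
  have hE : ∀ i : Fin n, (e ∘ t) i ∈ D'.consts := by
    intro i
    have hti := ht i
    simp only [Database.consts, Set.mem_iUnion] at hti
    obtain ⟨a, ha, hmem⟩ := hti
    have haD0 : a ∈ (D.conRestrict t).atoms :=
      ⟨ha, t i, ⟨i, rfl⟩, t i, hmem, Relation.ReflTransGen.refl⟩
    obtain ⟨j, hj⟩ := hmem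
    exact Set.mem_biUnion (honto1 a haD0) ⟨j, congrArg e hj⟩
  -- every constant of D' is reachable from the base constants
  have hreach : ∀ c ∈ D'.consts, ∃ k, ReachN D' (Set.range (e ∘ t)) k c := by
    intro c hc
    simp only [Database.consts, Set.mem_iUnion] at hc
    obtain ⟨a', ha', hca⟩ := hc
    obtain ⟨a, haD0, hma⟩ := honto2 a' ha'
    obtain ⟨haD, c₀, hc₀, d₀, hd₀, hrtg⟩ := haD0
    have hrtg0 : Relation.ReflTransGen (D.conRestrict t).adj c₀ d₀ :=
      rtg_restrict D t hc₀ hrtg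
    have hrtg' : Relation.ReflTransGen D'.adj (e c₀) (e d₀) := rtg_map honto1 hrtg0
    have hadj : D'.adj (e d₀) c := by
      refine ⟨a', ha', ?_, hca⟩
      obtain ⟨i, hi⟩ := hd₀
      rw [← hma]
      exact ⟨i, congrArg e hi⟩
    obtain ⟨i, hi⟩ := hc₀
    exact reachN_of_rtg ⟨i, congrArg e hi⟩ (hrtg'.tail hadj)
  -- the number of constants of D' is at most |D|
  have hMle : D'.consts.ncard ≤ D.csize := by
    have hsub : D'.consts ⊆ e '' D.consts := by
      intro c hc
      simp only [Database.consts, Set.mem_iUnion] at hc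
      obtain ⟨a', ha', hca⟩ := hc
      obtain ⟨a, haD0, hma⟩ := honto2 a' ha'
      rw [← hma] at hca
      obtain ⟨i, hi⟩ := hca
      refine ⟨a.args i, ?_, hi⟩
      simp only [Database.consts, Set.mem_iUnion]
      exact ⟨a, haD0.1, ⟨i, rfl⟩⟩
    calc D'.consts.ncard ≤ (e '' D.consts).ncard :=
          Set.ncard_le_ncard hsub (D.consts_finite.image e)
      _ ≤ D.consts.ncard := Set.ncard_image_le D.consts_finite
  obtain ⟨k₀, hk₀M, hk₀⟩ := reachN_bound (D'' := D') (E := Set.range (e ∘ t))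
    (fun c hc => by obtain ⟨i, hi⟩ := hc; exact hi ▸ hE i)
    ⟨(e ∘ t) ⟨0, npos⟩, ⟨⟨0, npos⟩, rfl⟩⟩
  -- suppose the conclusion fails
  by_cases hgoal : ∃ d d' : A.Dom, d ≠ d' ∧
      (∃ i : Fin n, WithinDist A D.csize (b i) d) ∧
      (∃ i : Fin n, WithinDist A D.csize (b i) d') ∧
      GLBisimilar true sg A (fun _ : Fin 1 => d) A (fun _ : Fin 1 => d') (ℓ - D.csize)
  · exact hgoal
  exfalso
  have hstar : ∀ d d' : A.Dom, (∃ i : Fin n, WithinDist A D.csize (b i) d) →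
      (∃ i : Fin n, WithinDist A D.csize (b i) d') →
      GLBisimilar true sg A (fun _ : Fin 1 => d) A (fun _ : Fin 1 => d') (ℓ - D.csize) →
      d = d' := by
    intro d d' h1 h2 h3
    by_contra hne
    exact hgoal ⟨d, d', hne, h1, h2, h3⟩
  apply hhom
  -- candidate values
  set Val : ℕ → A.Dom → Prop := fun c d =>
    ∃ p ∈ H, ∃ (w : Fin p.k → A.Dom) (r : ℕ) (i : Fin p.k),
      r ≤ D.csize ∧ Cand sg A H ℓ (e ∘ t) b p w r ∧ p.c i = c ∧ w i = d with hValdef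
  have huniq : ∀ c d d', Val c d → Val c d' → d = d' := by
    rintro c d d' ⟨p₁, hp₁, w₁, r₁, i₁, hr₁, hcand₁, hcc₁, hww₁⟩
      ⟨p₂, hp₂, w₂, r₂, i₂, hr₂, hcand₂, hcc₂, hww₂⟩
    subst hww₁; subst hww₂
    apply hstar
    · obtain ⟨i₀, hw⟩ := cand_near hcand₁ i₁
      exact ⟨i₀, withinDist_mono hw hr₁⟩
    · obtain ⟨i₀, hw⟩ := cand_near hcand₂ i₂
      exact ⟨i₀, withinDist_mono hw hr₂⟩
    · have b1 : GLBisimilar true sg A (fun _ : Fin 1 => w₁ i₁)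
          A (fun _ : Fin 1 => p₁.f i₁) (ℓ - r₁) :=
        glb_sub (cand_bisim hcand₁) (fun _ : Fin 1 => i₁)
      have b2 : GLBisimilar true sg A (fun _ : Fin 1 => p₁.f i₁)
          A (fun _ : Fin 1 => p₂.f i₂) ℓ :=
        pairf_bisim hpemb hpair hp₁ hp₂ (hcc₁.trans hcc₂.symm)
      have b3 : GLBisimilar true sg A (fun _ : Fin 1 => p₂.f i₂)
          A (fun _ : Fin 1 => w₂ i₂) (ℓ - r₂) :=
        glb_symm (glb_sub (cand_bisim hcand₂) (fun _ : Fin 1 => i₂))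
      exact glb_trans (glb_trans (glb_mono b1 (by omega)) (glb_mono b2 (by omega)))
        (glb_mono b3 (by omega))
  -- a choice of values
  have hch : ∀ c : ℕ, ∃ d : A.Dom, (∃ d', Val c d') → Val c d := by
    intro c
    by_cases hc : ∃ d', Val c d'
    · exact ⟨hc.choose, fun _ => hc.choose_spec⟩
    · exact ⟨Classical.choice A.dom_nonempty, fun h' => absurd h' hc⟩
  choose h hh using hch
  have hval : ∀ c d, Val c d → h c = d := fun c d hv => huniq c (h c) d (hh c ⟨d, hv⟩) hv
  -- every atom of D' holds under h
  have hatom : ∀ a' ∈ D'.atoms, a'.Holds A h := by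
    intro a' ha'
    rcases Nat.eq_zero_or_pos a'.arity with h0 | hpos
    · obtain ⟨p, hp, hrg⟩ := hcover (Set.range a'.args) (Or.inr ⟨a', ha', rfl⟩)
      have hie : IsEmpty (Fin a'.arity) := by rw [h0]; infer_instance
      have hargs : a'.args = p.c ∘ (fun s => (hie.false s).elim) :=
        funext fun s => (hie.false s).elim
      have hrel := (hpemb p hp).2.2 a' ha' _ hargs
      have heqf : (fun i => h (a'.args i)) = p.f ∘ (fun s : Fin a'.arity => (hie.false s).elim) :=
        funext fun s => (hie.false s).elim
      show A.rel a'.arity a'.rel fun i => h (a'.args i)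
      rw [heqf]
      exact hrel
    · have hcmem : a'.args ⟨0, hpos⟩ ∈ D'.consts :=
        Set.mem_biUnion ha' ⟨⟨0, hpos⟩, rfl⟩
      have hre : ReachN D' (Set.range (e ∘ t)) k₀ (a'.args ⟨0, hpos⟩) :=
        hk₀ _ (hreach _ hcmem)
      obtain ⟨p', hp'H, hpr, w', r, hrle, hcand⟩ :=
        cand_cover hsigD' hpemb hcover hpair hp0 k₀ (by omega) _ hre a' ha' ⟨⟨0, hpos⟩, rfl⟩
      have hg0 : ∀ s : Fin a'.arity, ∃ idx : Fin p'.k, p'.c idx = a'.args s := by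
        intro s
        have : a'.args s ∈ Set.range p'.c := by rw [hpr]; exact ⟨s, rfl⟩
        exact this
      choose g hg using hg0
      have hargs : a'.args = p'.c ∘ g := funext fun s => (hg s).symm
      have hrel : A.rel a'.arity a'.rel (p'.f ∘ g) := (hpemb p' hp'H).2.2 a' ha' g hargs
      have hiso := glb_partialIso (cand_bisim hcand)
      have hrelw : A.rel a'.arity a'.rel (w' ∘ g) :=
        (hiso.2 a'.arity a'.rel (hsigD' ⟨a', ha', rfl⟩) g).mpr hrel
      have heqf : (fun i => h (a'.args i)) = w' ∘ g := by
        funext s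
        exact hval _ _ ⟨p', hp'H, w', r, g s, by omega, hcand, hg s, rfl⟩
      show A.rel a'.arity a'.rel fun i => h (a'.args i)
      rw [heqf]
      exact hrelw
  -- assemble the homomorphism
  refine ⟨h ∘ e, ?_, ?_⟩
  · intro a haD0
    exact hatom (a.mapC e) (honto1 a haD0)
  · intro i
    exact hval (e (t i)) (b i)
      ⟨⟨n, e ∘ t, b⟩, hp0, b, 0, i, by omega, Cand.base, rfl, rfl⟩

end Sep
end
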